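/- arXiv:2301.03851 — 5 statements merged into one kernel-verified Lean document; each statement's English description precedes it below -/
import Mathlib

section
/- Let p, q be polynomials with real coefficients in d variables such that p + i·q is not identically zero, and let z_{d+1} be a new indeterminate. Then p + i·q is stable (nonvanishing on the open upper poly-half-plane Π^d) if and only if the polynomial p(z) + z_{d+1}·q(z) in d+1 variables is real stable (nonvanishing on Π^{d+1}). -/
open MvPolynomial Complex

noncomputable section

/-- Univariate key: stable poly satisfies |D(-i)| ≤ |D(i)|. -/
lemma univ_key (D : Polynomial ℂ) (hD : D ≠ 0)
    (hroots : ∀ ρ : ℂ, D.IsRoot ρ → ρ.im ≤ 0) :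
    ‖D.eval (-I)‖₊ ≤ ‖D.eval I‖₊ := by
  have hsplit : D.Splits := IsAlgClosed.splits D
  have hcard := (Polynomial.splits_iff_card_roots).mp hsplit
  have key := Polynomial.C_leadingCoeff_mul_prod_multiset_X_sub_C hcard
  have heval : ∀ ζ : ℂ, D.eval ζ = D.leadingCoeff * (D.roots.map fun a => ζ - a).prod := by
    intro ζ
    conv_lhs => rw [← key]
    simp [Polynomial.eval_multiset_prod, Multiset.map_map, Function.comp]
  have hnn : ∀ ζ : ℂ, ‖D.eval ζ‖₊ = ‖D.leadingCoeff‖₊ * (D.roots.map fun a => ‖ζ - a‖₊).prod := by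
    intro ζ
    rw [heval ζ, nnnorm_mul]
    congr 1
    induction D.roots using Multiset.induction with
    | empty => simp
    | cons a s ih => simp [nnnorm_mul, ih]
  rw [hnn, hnn]
  refine mul_le_mul_right ?_ _
  refine Multiset.prod_map_le_prod_map _ _ ?_
  intro r hr
  have him : r.im ≤ 0 := hroots r ((Polynomial.mem_roots hD).mp hr)
  have : ‖-I - r‖ ≤ ‖I - r‖ := by
    rw [← Real.sqrt_sq (norm_nonneg (-I - r)), ← Real.sqrt_sq (norm_nonneg (I - r))]
    apply Real.sqrt_le_sqrt
    have h1 : ‖-I - r‖ ^ 2 = Complex.normSq (-I - r) := by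
      rw [← Complex.sq_norm]
    have h2 : ‖I - r‖ ^ 2 = Complex.normSq (I - r) := by
      rw [← Complex.sq_norm]
    rw [h1, h2]
    simp [Complex.normSq_apply]
    nlinarith
  exact_mod_cast this

/-- Evaluating a real mv-polynomial (mapped to ℂ) at conjugate point gives conjugate. -/
lemma eval_conj (d : ℕ) (p : MvPolynomial (Fin d) ℝ) (z : Fin d → ℂ) :
    MvPolynomial.eval (fun k => (starRingEnd ℂ) (z k)) (MvPolynomial.map (algebraMap ℝ ℂ) p) =
      (starRingEnd ℂ) (MvPolynomial.eval z (MvPolynomial.map (algebraMap ℝ ℂ) p)) := by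
  rw [MvPolynomial.eval_map, MvPolynomial.eval_map,
    MvPolynomial.eval₂_comp_left (starRingEnd ℂ) (algebraMap ℝ ℂ) z p]
  congr 1
  ext r
  simp [Complex.conj_ofReal]

/-- Evaluation of the substituted univariate polynomial. -/
lemma eval_line (d : ℕ) (f : MvPolynomial (Fin d) ℂ) (x y : Fin d → ℝ) (ζ : ℂ) :
    Polynomial.eval ζ (MvPolynomial.aeval
        (fun k => Polynomial.C (x k : ℂ) + Polynomial.X * Polynomial.C (y k : ℂ)) f) =
      MvPolynomial.eval (fun k => (x k : ℂ) + ζ * (y k : ℂ)) f := by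
  rw [MvPolynomial.aeval_def]
  show (Polynomial.evalRingHom ζ) _ = _
  rw [MvPolynomial.eval₂_comp_left (Polynomial.evalRingHom ζ)]
  rw [MvPolynomial.eval]
  congr 1
  · ext r <;> simp
  · ext k; simp; ring

/-- Key inequality: if p+iq is stable then |p-iq| ≤ |p+iq| on the poly-upper-half-plane. -/
lemma lemA (d : ℕ) (p q : MvPolynomial (Fin d) ℝ)
    (hstab : ∀ z : Fin d → ℂ, (∀ k, 0 < (z k).im) →
        MvPolynomial.eval z (MvPolynomial.map (algebraMap ℝ ℂ) p) +
          Complex.I * MvPolynomial.eval z (MvPolynomial.map (algebraMap ℝ ℂ) q) ≠ 0)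
    (z : Fin d → ℂ) (hz : ∀ k, 0 < (z k).im) :
    ‖MvPolynomial.eval z (MvPolynomial.map (algebraMap ℝ ℂ) p) -
        Complex.I * MvPolynomial.eval z (MvPolynomial.map (algebraMap ℝ ℂ) q)‖ ≤
      ‖MvPolynomial.eval z (MvPolynomial.map (algebraMap ℝ ℂ) p) +
        Complex.I * MvPolynomial.eval z (MvPolynomial.map (algebraMap ℝ ℂ) q)‖ := by
  set f : MvPolynomial (Fin d) ℂ :=
    MvPolynomial.map (algebraMap ℝ ℂ) p + MvPolynomial.C Complex.I *
      MvPolynomial.map (algebraMap ℝ ℂ) q with hf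
  set x : Fin d → ℝ := fun k => (z k).re
  set y : Fin d → ℝ := fun k => (z k).im
  set D : Polynomial ℂ := MvPolynomial.aeval
    (fun k => Polynomial.C (x k : ℂ) + Polynomial.X * Polynomial.C (y k : ℂ)) f with hD
  have hevalf : ∀ w : Fin d → ℂ, MvPolynomial.eval w f =
      MvPolynomial.eval w (MvPolynomial.map (algebraMap ℝ ℂ) p) +
        Complex.I * MvPolynomial.eval w (MvPolynomial.map (algebraMap ℝ ℂ) q) := by
    intro w; simp [hf]
  have hDe : ∀ ζ : ℂ, Polynomial.eval ζ D =
      MvPolynomial.eval (fun k => (x k : ℂ) + ζ * (y k : ℂ)) f := fun ζ => eval_line d f x y ζ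
  have hzI : (fun k => (x k : ℂ) + Complex.I * (y k : ℂ)) = z := by
    funext k; rw [mul_comm]; exact Complex.re_add_im (z k)
  have hzmI : (fun k => (x k : ℂ) + (-Complex.I) * (y k : ℂ)) = fun k => (starRingEnd ℂ) (z k) := by
    funext k
    apply Complex.ext <;> simp [x, y]
  have hDI : Polynomial.eval Complex.I D ≠ 0 := by
    rw [hDe, hzI, hevalf]; exact hstab z hz
  have hDne : D ≠ 0 := fun h => hDI (by simp [h])
  have hroots : ∀ ρ : ℂ, D.IsRoot ρ → ρ.im ≤ 0 := by
    intro ρ hρ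
    by_contra him
    push_neg at him
    have hpt : ∀ k, (0:ℝ) < ((x k : ℂ) + ρ * (y k : ℂ)).im := by
      intro k
      simp only [Complex.add_im, Complex.ofReal_im, Complex.mul_im, Complex.ofReal_re,
        Complex.ofReal_im, zero_add]
      have := hz k
      have : 0 < ρ.im * y k := mul_pos him (hz k)
      simpa using this
    have := hstab _ hpt
    rw [← hevalf, ← hDe] at this
    exact this hρ
  have hkey : ‖Polynomial.eval (-Complex.I) D‖₊ ≤ ‖Polynomial.eval Complex.I D‖₊ :=
    univ_key D hDne hroots
  have hleft : ‖Polynomial.eval (-Complex.I) D‖ =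
      ‖MvPolynomial.eval z (MvPolynomial.map (algebraMap ℝ ℂ) p) -
        Complex.I * MvPolynomial.eval z (MvPolynomial.map (algebraMap ℝ ℂ) q)‖ := by
    rw [hDe, hzmI, hevalf, eval_conj, eval_conj]
    rw [show ∀ a b : ℂ, (starRingEnd ℂ) a + Complex.I * (starRingEnd ℂ) b =
        (starRingEnd ℂ) (a - Complex.I * b) by intro a b; rw [map_sub, map_mul, Complex.conj_I]; ring]
    exact norm_star _
  have hright : ‖Polynomial.eval Complex.I D‖ =
      ‖MvPolynomial.eval z (MvPolynomial.map (algebraMap ℝ ℂ) p) +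
        Complex.I * MvPolynomial.eval z (MvPolynomial.map (algebraMap ℝ ℂ) q)‖ := by
    rw [hDe, hzI, hevalf]
  rw [← hleft, ← hright]
  exact_mod_cast hkey

/-- `p + i·q` (real polys in `d` variables) is stable on the upper
poly-half-plane iff the real polynomial `p(z) + z_{d+1}·q(z)` in `d+1` variables
is real stable. -/
theorem darlington_stmt0 (d : ℕ) (p q : MvPolynomial (Fin d) ℝ)
    (hne : (MvPolynomial.map (algebraMap ℝ ℂ) p) + MvPolynomial.C Complex.I *
        (MvPolynomial.map (algebraMap ℝ ℂ) q) ≠ 0) :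
    (∀ z : Fin d → ℂ, (∀ k, 0 < (z k).im) →
        MvPolynomial.eval z (MvPolynomial.map (algebraMap ℝ ℂ) p) +
          Complex.I * MvPolynomial.eval z (MvPolynomial.map (algebraMap ℝ ℂ) q) ≠ 0)
      ↔
    (∀ w : Fin (d + 1) → ℂ, (∀ k, 0 < (w k).im) →
        MvPolynomial.eval (w ∘ Fin.castSucc) (MvPolynomial.map (algebraMap ℝ ℂ) p) +
          w (Fin.last d) *
            MvPolynomial.eval (w ∘ Fin.castSucc) (MvPolynomial.map (algebraMap ℝ ℂ) q) ≠ 0) := by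
  constructor
  · intro hstab w hw
    set z : Fin d → ℂ := w ∘ Fin.castSucc with hzdef
    have hz : ∀ k, 0 < (z k).im := fun k => hw _
    set P := MvPolynomial.eval z (MvPolynomial.map (algebraMap ℝ ℂ) p) with hP
    set Q := MvPolynomial.eval z (MvPolynomial.map (algebraMap ℝ ℂ) q) with hQ
    set ω := w (Fin.last d) with hω'
    have hω : 0 < ω.im := hw _
    intro h0
    have ha : P + Complex.I * Q ≠ 0 := hstab z hz
    have hb : ‖P - Complex.I * Q‖ ≤ ‖P + Complex.I * Q‖ := lemA d p q hstab z hz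
    have key : (Complex.I + ω) * (P + Complex.I * Q) =
        (ω - Complex.I) * (P - Complex.I * Q) := by
      have h0' : P + ω * Q = 0 := h0
      linear_combination (2 * Complex.I) * h0'
    have e1 : ‖Complex.I + ω‖ * ‖P + Complex.I * Q‖ =
        ‖ω - Complex.I‖ * ‖P - Complex.I * Q‖ := by
      rw [← norm_mul, ← norm_mul, key]
    have hPa : 0 < ‖P + Complex.I * Q‖ := norm_pos_iff.mpr ha
    have hsq : ‖ω - Complex.I‖ ^ 2 < ‖Complex.I + ω‖ ^ 2 := by
      have h1 : ‖ω - Complex.I‖ ^ 2 = Complex.normSq (ω - Complex.I) := by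
        rw [← Complex.sq_norm]
      have h2 : ‖Complex.I + ω‖ ^ 2 = Complex.normSq (Complex.I + ω) := by
        rw [← Complex.sq_norm]
      rw [h1, h2]
      simp [Complex.normSq_apply]
      nlinarith
    have hlt : ‖ω - Complex.I‖ < ‖Complex.I + ω‖ :=
      lt_of_pow_lt_pow_left₀ 2 (norm_nonneg _) hsq
    nlinarith [mul_le_mul_of_nonneg_left hb (norm_nonneg (ω - Complex.I)),
      mul_lt_mul_of_pos_right hlt hPa]
  · intro hstab z hz
    have hpos : ∀ k : Fin (d + 1), 0 < ((Fin.snoc z Complex.I : Fin (d+1) → ℂ) k).im := by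
      intro k
      refine Fin.lastCases ?_ ?_ k
      · simp
      · intro i; simpa using hz i
    have := hstab (Fin.snoc z Complex.I) hpos
    have hcomp : (Fin.snoc z Complex.I : Fin (d+1) → ℂ) ∘ Fin.castSucc = z := by
      funext k; simp
    rw [hcomp] at this
    simpa [mul_comm] using this
end
end

section
/- Let p, q be coprime polynomials with real coefficients in d variables, both not identically zero. Then all nonzero polynomials in the pencil {α·p + β·q : α, β ∈ ℝ} are real stable if and only if either Im(p(z)/q(z)) ≥ 0 for all z ∈ Π^d, or Im(p(z)/q(z)) ≤ 0 for all z ∈ Π^d. -/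
open MvPolynomial Complex Set Filter Metric
open scoped Topology

namespace DarlingtonAux2

variable {E : Type*} [NormedAddCommGroup E] [NormedSpace ℂ E]

/-- If an analytic function has a local max of its imaginary part, it is locally constant. -/
lemma eventually_const_of_im_le {g : E → ℂ} {z₀ : E} (hg : AnalyticAt ℂ g z₀)
    (h : ∀ᶠ z in 𝓝 z₀, (g z).im ≤ (g z₀).im) : ∀ᶠ z in 𝓝 z₀, g z = g z₀ := by
  rcases hg.eventually_constant_or_nhds_le_map_nhds with h1 | h1
  · exact h1
  · exfalso
    have hS : {w : ℂ | w.im ≤ (g z₀).im} ∈ Filter.map g (𝓝 z₀) := h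
    have hS' : {w : ℂ | w.im ≤ (g z₀).im} ∈ 𝓝 (g z₀) := h1 hS
    rcases Metric.mem_nhds_iff.1 hS' with ⟨ε, hε, hball⟩
    have hw : g z₀ + ((ε/2 : ℝ) : ℂ) * I ∈ Metric.ball (g z₀) ε := by
      have : dist (g z₀ + ((ε/2 : ℝ) : ℂ) * I) (g z₀) = ε / 2 := by
        rw [Complex.dist_eq, add_sub_cancel_left]
        simp
        exact hε.le
      rw [Metric.mem_ball, this]
      linarith
    have h2 : (g z₀ + ((ε/2 : ℝ) : ℂ) * I).im ≤ (g z₀).im := hball hw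
    simp only [Complex.add_im, Complex.mul_im, Complex.ofReal_re, Complex.I_im,
      Complex.ofReal_im, Complex.I_re, mul_one, mul_zero, add_zero] at h2
    linarith

lemma eventually_const_of_le_im {g : E → ℂ} {z₀ : E} (hg : AnalyticAt ℂ g z₀)
    (h : ∀ᶠ z in 𝓝 z₀, (g z₀).im ≤ (g z).im) : ∀ᶠ z in 𝓝 z₀, g z = g z₀ := by
  have h' : ∀ᶠ z in 𝓝 z₀, ((fun z => -g z) z).im ≤ ((fun z => -g z) z₀).im := by
    filter_upwards [h] with z hz
    simpa using neg_le_neg hz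
  have := eventually_const_of_im_le hg.neg h'
  filter_upwards [this] with z hz
  exact neg_inj.1 hz

lemma analytic_eval (d : ℕ) (r : MvPolynomial (Fin d) ℂ) :
    AnalyticOnNhd ℂ (fun z : Fin d → ℂ => eval z r) Set.univ := by
  induction r using MvPolynomial.induction_on with
  | C a => simpa using (analyticOnNhd_const : AnalyticOnNhd ℂ (fun _ : Fin d → ℂ => a) Set.univ)
  | add p q hp hq => simp only [map_add]; exact hp.add hq
  | mul_X p n hp =>
      simp only [map_mul, eval_X]
      exact hp.mul ((ContinuousLinearMap.proj n : (Fin d → ℂ) →L[ℂ] ℂ).analyticOnNhd Set.univ)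

lemma isOpen_UHP (d : ℕ) : IsOpen {z : Fin d → ℂ | ∀ k, 0 < (z k).im} := by
  have : {z : Fin d → ℂ | ∀ k, 0 < (z k).im}
      = ⋂ k, (fun z : Fin d → ℂ => (z k).im) ⁻¹' Set.Ioi 0 := by
    ext z; simp [Set.mem_iInter]
  rw [this]
  exact isOpen_iInter_of_finite fun k =>
    (Complex.continuous_im.comp (continuous_apply k)).isOpen_preimage _ isOpen_Ioi

lemma convex_UHP (d : ℕ) : Convex ℝ {z : Fin d → ℂ | ∀ k, 0 < (z k).im} := by
  intro x hx y hy a b ha hb hab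
  intro k
  have him : ((a • x + b • y) k).im = a * (x k).im + b * (y k).im := by
    simp [Complex.smul_im]
  rw [Set.mem_setOf_eq] at hx hy
  show 0 < ((a • x + b • y) k).im
  rw [him]
  rcases lt_or_eq_of_le ha with h0 | h0
  · exact add_pos_of_pos_of_nonneg (mul_pos h0 (hx k)) (mul_nonneg hb (hy k).le)
  · have hb1 : b = 1 := by linarith
    simp [← h0, hb1]
    exact hy k

lemma eval_pencil (d : ℕ) (α β : ℝ) (p q : MvPolynomial (Fin d) ℝ) (z : Fin d → ℂ) :
    eval z (map (algebraMap ℝ ℂ) (α • p + β • q))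
      = (α : ℂ) * eval z (map (algebraMap ℝ ℂ) p) + (β : ℂ) * eval z (map (algebraMap ℝ ℂ) q) := by
  simp [MvPolynomial.smul_eq_C_mul]

lemma key (d : ℕ) (p q : MvPolynomial (Fin d) ℝ)
    (hcop : IsCoprime p q) (hq : q ≠ 0)
    (H : ∀ z : Fin d → ℂ, (∀ k, 0 < (z k).im) →
        MvPolynomial.eval z (MvPolynomial.map (algebraMap ℝ ℂ) q) ≠ 0 →
        0 ≤ (MvPolynomial.eval z (MvPolynomial.map (algebraMap ℝ ℂ) p) /
              MvPolynomial.eval z (MvPolynomial.map (algebraMap ℝ ℂ) q)).im) :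
    ∀ α β : ℝ, α • p + β • q ≠ 0 →
      ∀ z : Fin d → ℂ, (∀ k, 0 < (z k).im) →
        MvPolynomial.eval z (MvPolynomial.map (algebraMap ℝ ℂ) (α • p + β • q)) ≠ 0 := by
  set P : (Fin d → ℂ) → ℂ := fun z => eval z (map (algebraMap ℝ ℂ) p) with hPdef
  set Q : (Fin d → ℂ) → ℂ := fun z => eval z (map (algebraMap ℝ ℂ) q) with hQdef
  have hPa : AnalyticOnNhd ℂ P Set.univ := analytic_eval d _
  have hQa : AnalyticOnNhd ℂ Q Set.univ := analytic_eval d _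
  -- Step 1: Q does not vanish on the poly upper half-plane.
  have hQne : ∀ z : Fin d → ℂ, (∀ k, 0 < (z k).im) → Q z ≠ 0 := by
    intro z₀ hz₀ hQ0
    obtain ⟨a, b, hab⟩ := hcop
    have hP0 : P z₀ ≠ 0 := by
      intro h0
      have h1 := congrArg (fun r => eval z₀ (map (algebraMap ℝ ℂ) r)) hab
      simp only [map_add, map_mul, map_one] at h1
      rw [show eval z₀ (map (algebraMap ℝ ℂ) p) = P z₀ from rfl,
        show eval z₀ (map (algebraMap ℝ ℂ) q) = Q z₀ from rfl, h0, hQ0] at h1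
      simp at h1
    have hg : AnalyticAt ℂ (fun z => Q z / P z) z₀ :=
      ((hQa z₀ (Set.mem_univ _)).div (hPa z₀ (Set.mem_univ _)) hP0)
    have hev1 : ∀ᶠ z in 𝓝 z₀, z ∈ {z : Fin d → ℂ | ∀ k, 0 < (z k).im} :=
      (isOpen_UHP d).eventually_mem hz₀
    have hev2 : ∀ᶠ z in 𝓝 z₀, P z ≠ 0 :=
      ((hPa z₀ (Set.mem_univ _)).continuousAt).eventually_ne hP0
    have hev : ∀ᶠ z in 𝓝 z₀, ((fun z => Q z / P z) z).im ≤ ((fun z => Q z / P z) z₀).im := by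
      filter_upwards [hev1, hev2] with z hz hPz
      have hz0im : (Q z₀ / P z₀).im = 0 := by rw [hQ0]; simp
      show (Q z / P z).im ≤ (Q z₀ / P z₀).im
      rw [hz0im]
      by_cases hQz : Q z = 0
      · simp [hQz]
      · have h1 := H z hz hQz
        have h2 : Q z / P z = (P z / Q z)⁻¹ := (inv_div _ _).symm
        rw [h2, Complex.inv_im]
        exact div_nonpos_of_nonpos_of_nonneg (neg_nonpos.2 h1) (normSq_nonneg _)
    have hconst := eventually_const_of_im_le hg hev
    have hQev : Q =ᶠ[𝓝 z₀] 0 := by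
      filter_upwards [hconst, hev2] with z hz hPz
      have h3 : Q z / P z = 0 := by
        rw [hz, hQ0]; simp
      exact (div_eq_zero_iff.1 h3).resolve_right hPz
    have hEq : Set.EqOn Q 0 Set.univ :=
      hQa.eqOn_zero_of_preconnected_of_eventuallyEq_zero isPreconnected_univ (Set.mem_univ z₀) hQev
    have hq0 : map (algebraMap ℝ ℂ) q = 0 := by
      apply MvPolynomial.funext
      intro x
      rw [map_zero]
      exact hEq (Set.mem_univ x)
    exact hq (MvPolynomial.map_injective (algebraMap ℝ ℂ) (algebraMap ℝ ℂ).injective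
      (by rw [hq0, map_zero]))
  -- Step 2: pencil members do not vanish.
  intro α β hne z₀ hz₀ hR0
  rw [eval_pencil] at hR0
  rw [show eval z₀ (map (algebraMap ℝ ℂ) p) = P z₀ from rfl,
    show eval z₀ (map (algebraMap ℝ ℂ) q) = Q z₀ from rfl] at hR0
  have hQz₀ := hQne z₀ hz₀
  by_cases hα : α = 0
  · subst hα
    have hβ' : β = 0 := (by simpa using hR0 : β = 0 ∨ Q z₀ = 0).resolve_right hQz₀
    subst hβ'
    exact hne (by simp)
  · have hα' : (α : ℂ) ≠ 0 := Complex.ofReal_ne_zero.2 hα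
    have hf : AnalyticAt ℂ (fun z => P z / Q z) z₀ :=
      (hPa z₀ (Set.mem_univ _)).div (hQa z₀ (Set.mem_univ _)) hQz₀
    have hval : P z₀ / Q z₀ = -(β : ℂ) / (α : ℂ) := by
      field_simp
      linear_combination hR0
    have him0 : (P z₀ / Q z₀).im = 0 := by
      rw [hval, show -(β : ℂ) / (α : ℂ) = ((-β / α : ℝ) : ℂ) by push_cast; ring]
      exact Complex.ofReal_im _
    have hev : ∀ᶠ z in 𝓝 z₀, ((fun z => P z / Q z) z₀).im ≤ ((fun z => P z / Q z) z).im := by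
      filter_upwards [(isOpen_UHP d).eventually_mem hz₀] with z hz
      show (P z₀ / Q z₀).im ≤ (P z / Q z).im
      rw [him0]
      exact H z hz (hQne z hz)
    have hconst := eventually_const_of_le_im hf hev
    have hRev : (fun z => eval z (map (algebraMap ℝ ℂ) (α • p + β • q))) =ᶠ[𝓝 z₀] 0 := by
      filter_upwards [hconst, (isOpen_UHP d).eventually_mem hz₀] with z hc hz
      have hQz := hQne z hz
      have hc' : P z / Q z = P z₀ / Q z₀ := hc
      have hPz : P z = (P z₀ / Q z₀) * Q z := by
        rw [← hc']; field_simp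
      show eval z (map (algebraMap ℝ ℂ) (α • p + β • q)) = 0
      rw [eval_pencil]
      rw [show eval z (map (algebraMap ℝ ℂ) p) = P z from rfl,
        show eval z (map (algebraMap ℝ ℂ) q) = Q z from rfl, hPz, hval]
      field_simp
      ring
    have hRa : AnalyticOnNhd ℂ (fun z : Fin d → ℂ =>
        eval z (map (algebraMap ℝ ℂ) (α • p + β • q))) Set.univ := analytic_eval d _
    have hEq := hRa.eqOn_zero_of_preconnected_of_eventuallyEq_zero isPreconnected_univ
      (Set.mem_univ z₀) hRev
    have hr0 : map (algebraMap ℝ ℂ) (α • p + β • q) = 0 := by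
      apply MvPolynomial.funext
      intro x
      rw [map_zero]
      exact hEq (Set.mem_univ x)
    exact hne (MvPolynomial.map_injective (algebraMap ℝ ℂ) (algebraMap ℝ ℂ).injective
      (by rw [hr0, map_zero]))

end DarlingtonAux2

open DarlingtonAux2

/-- for coprime nonzero real polynomials `p, q`, all nonzero members
of the pencil `{α·p + β·q}` are real stable iff `Im (p/q)` has a constant sign
(≥ 0 everywhere, or ≤ 0 everywhere) on the upper poly-half-plane, the inequality
being understood at points where `q` does not vanish. -/
theorem darlington_stmt2 (d : ℕ) (p q : MvPolynomial (Fin d) ℝ)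
    (hcop : IsCoprime p q) (hp : p ≠ 0) (hq : q ≠ 0) :
    (∀ α β : ℝ, α • p + β • q ≠ 0 →
      ∀ z : Fin d → ℂ, (∀ k, 0 < (z k).im) →
        MvPolynomial.eval z (MvPolynomial.map (algebraMap ℝ ℂ) (α • p + β • q)) ≠ 0)
      ↔
    ((∀ z : Fin d → ℂ, (∀ k, 0 < (z k).im) →
        MvPolynomial.eval z (MvPolynomial.map (algebraMap ℝ ℂ) q) ≠ 0 →
        0 ≤ (MvPolynomial.eval z (MvPolynomial.map (algebraMap ℝ ℂ) p) /
              MvPolynomial.eval z (MvPolynomial.map (algebraMap ℝ ℂ) q)).im) ∨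
     (∀ z : Fin d → ℂ, (∀ k, 0 < (z k).im) →
        MvPolynomial.eval z (MvPolynomial.map (algebraMap ℝ ℂ) q) ≠ 0 →
        (MvPolynomial.eval z (MvPolynomial.map (algebraMap ℝ ℂ) p) /
              MvPolynomial.eval z (MvPolynomial.map (algebraMap ℝ ℂ) q)).im ≤ 0)) := by
  set P : (Fin d → ℂ) → ℂ := fun z => eval z (map (algebraMap ℝ ℂ) p) with hPdef
  set Q : (Fin d → ℂ) → ℂ := fun z => eval z (map (algebraMap ℝ ℂ) q) with hQdef
  constructor
  · -- stability → constant sign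
    intro h
    by_contra hcon
    push_neg at hcon
    obtain ⟨⟨z₁, hz₁, hQ₁, h₁⟩, ⟨z₂, hz₂, hQ₂, h₂⟩⟩ := hcon
    have hQne : ∀ z : Fin d → ℂ, (∀ k, 0 < (z k).im) → Q z ≠ 0 := by
      intro z hz
      have h0 := h 0 1 (by rw [zero_smul, one_smul, zero_add]; exact hq) z hz
      rw [zero_smul, one_smul, zero_add] at h0
      exact h0
    have hPc : Continuous P := by
      rw [← continuousOn_univ]
      exact (analytic_eval d _).continuousOn
    have hQc : Continuous Q := by
      rw [← continuousOn_univ]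
      exact (analytic_eval d _).continuousOn
    set S : Set (Fin d → ℂ) := {z | ∀ k, 0 < (z k).im} with hSdef
    have hSpre : IsPreconnected S := (convex_UHP d).isPreconnected
    have hfc : ContinuousOn (fun z => (P z / Q z).im) S :=
      Complex.continuous_im.comp_continuousOn
        ((hPc.continuousOn).div (hQc.continuousOn) (fun z hz => hQne z hz))
    have h0mem : (0 : ℝ) ∈ Set.Icc ((P z₁ / Q z₁).im) ((P z₂ / Q z₂).im) := ⟨h₁.le, h₂.le⟩
    obtain ⟨z₃, hz₃, hfz₃⟩ := hSpre.intermediate_value hz₁ hz₂ hfc h0mem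
    have hQz₃ := hQne z₃ hz₃
    set r : ℝ := (P z₃ / Q z₃).re with hrdef
    have heq : P z₃ / Q z₃ = (r : ℂ) := by
      apply Complex.ext
      · simp [hrdef]
      · simpa using hfz₃
    have hval : P z₃ = (r : ℂ) * Q z₃ := by
      rw [← heq]; field_simp
    by_cases hr : (1 : ℝ) • p + (-r) • q = 0
    · -- then p = r • q, so Im(P/Q) ≡ 0, contradicting h₁
      have hpq : p = r • q := by
        have : p + (-r) • q = 0 := by rwa [one_smul] at hr
        have h2 : p = -((-r) • q) := by linear_combination this
        rw [h2, neg_smul, neg_neg]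
      have hPz₁ : eval z₁ (map (algebraMap ℝ ℂ) p)
          = (r : ℂ) * eval z₁ (map (algebraMap ℝ ℂ) q) := by
        conv_lhs => rw [hpq]
        rw [show (r • q : MvPolynomial (Fin d) ℝ) = r • q + (0:ℝ) • q by simp, eval_pencil]
        simp
      rw [hPz₁, mul_div_assoc, div_self hQ₁, mul_one] at h₁
      simp at h₁
    · have h3 := h 1 (-r) hr z₃ hz₃
      rw [eval_pencil] at h3
      apply h3
      rw [show eval z₃ (map (algebraMap ℝ ℂ) p) = P z₃ from rfl,
        show eval z₃ (map (algebraMap ℝ ℂ) q) = Q z₃ from rfl, hval]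
      push_cast
      ring
  · -- constant sign → stability
    rintro (H | H)
    · exact key d p q hcop hq H
    · have H' : ∀ z : Fin d → ℂ, (∀ k, 0 < (z k).im) →
          MvPolynomial.eval z (MvPolynomial.map (algebraMap ℝ ℂ) q) ≠ 0 →
          0 ≤ (MvPolynomial.eval z (MvPolynomial.map (algebraMap ℝ ℂ) (-p)) /
                MvPolynomial.eval z (MvPolynomial.map (algebraMap ℝ ℂ) q)).im := by
        intro z hz hQz
        rw [map_neg, map_neg, neg_div, Complex.neg_im]
        exact neg_nonneg.2 (H z hz hQz)
      have hkey := key d (-p) q hcop.neg_left hq H'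
      intro α β hne z hz
      have h2 := hkey (-α) β (by rwa [neg_smul_neg]) z hz
      rwa [neg_smul_neg] at h2
end

section
/- (Generalized Darlington theorem.) For every rational ℂ^{m×m}-valued function f in the Nevanlinna class N_d^{m×m}, there exists a rational Cayley inner function g in the class IN_{d+1}^{m×m} (in d+1 variables) such that f(z) = g(z, i) for all z ∈ Π^d. Concretely, writing f = P/q with P, q coprime and defining P₁(z) = (P(z) − P(z̄)^*)/(2i), P₂(z) = (P(z) + P(z̄)^*)/2, q₁(z) = (q(z) − conj(q(z̄)))/(2i), q₂(z) = (q(z) + conj(q(z̄)))/2, the function g(z, z_{d+1}) = (z_{d+1}P₁(z) + P₂(z))/(z_{d+1}q₁(z) + q₂(z)) works. -/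
open MvPolynomial Complex Matrix
open scoped ComplexOrder

noncomputable section
open Polynomial Filter Set

noncomputable def Complex.abs : AbsoluteValue ℂ ℝ where
  toFun z := ‖z‖
  map_mul' := norm_mul
  nonneg' := norm_nonneg
  eq_zero' _ := norm_eq_zero
  add_le' := norm_add_le

lemma Complex.norm_eq_abs (z : ℂ) : ‖z‖ = Complex.abs z := rfl

lemma Complex.abs_apply {z : ℂ} : Complex.abs z = Real.sqrt (Complex.normSq z) := by
  show ‖z‖ = _
  rw [Complex.normSq_eq_norm_sq, Real.sqrt_sq (norm_nonneg _)]

lemma Complex.continuous_abs : Continuous ⇑Complex.abs := continuous_norm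

@[simp] lemma Complex.abs_ofReal (r : ℝ) : Complex.abs (r : ℂ) = |r| := Complex.norm_real r

@[simp] lemma Complex.abs_conj (z : ℂ) : Complex.abs (starRingEnd ℂ z) = Complex.abs z :=
  Complex.norm_conj z

@[simp] lemma Complex.abs_I : Complex.abs Complex.I = 1 := Complex.norm_I

@[simp] lemma Complex.abs_ofNat (n : ℕ) [n.AtLeastTwo] :
    Complex.abs (OfNat.ofNat n : ℂ) = OfNat.ofNat n := Complex.norm_ofNat n

lemma Complex.abs_re_le_abs (z : ℂ) : |z.re| ≤ Complex.abs z := Complex.abs_re_le_norm z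

lemma Complex.sq_abs (z : ℂ) : Complex.abs z ^ 2 = Complex.normSq z := Complex.sq_norm z




lemma polyConjEval (p : Polynomial ℂ) (z : ℂ) :
    (p.map (starRingEnd ℂ)).eval z = starRingEnd ℂ (p.eval (starRingEnd ℂ z)) := by
  rw [Polynomial.eval_map,
    show p.eval (starRingEnd ℂ z) = p.eval₂ (RingHom.id ℂ) (starRingEnd ℂ z) from rfl,
    Polynomial.hom_eval₂]
  simp

lemma mvConjEval {d : ℕ} (p : MvPolynomial (Fin d) ℂ) (z : Fin d → ℂ) :
    MvPolynomial.eval z (MvPolynomial.map (starRingEnd ℂ) p)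
      = starRingEnd ℂ (MvPolynomial.eval (fun k => starRingEnd ℂ (z k)) p) := by
  rw [MvPolynomial.eval_map]
  rw [show (MvPolynomial.eval (fun k => starRingEnd ℂ (z k)) p)
      = MvPolynomial.eval₂ (RingHom.id ℂ) (fun k => starRingEnd ℂ (z k)) p from rfl]
  rw [MvPolynomial.eval₂_comp_left (starRingEnd ℂ)]
  simp only [RingHom.comp_id]
  congr 1
  funext k
  simp




lemma polyBound (p : Polynomial ℂ) :
    ∃ C : ℝ, 0 ≤ C ∧ ∀ z : ℂ, Complex.abs (p.eval z) ≤ C * (1 + Complex.abs z) ^ p.natDegree := by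
  refine ⟨∑ i ∈ Finset.range (p.natDegree + 1), Complex.abs (p.coeff i), by positivity, ?_⟩
  intro z
  rw [Polynomial.eval_eq_sum_range]
  refine (AbsoluteValue.sum_le _ _ _).trans ?_
  rw [Finset.sum_mul]
  refine Finset.sum_le_sum fun i hi => ?_
  rw [_root_.map_mul, _root_.map_pow]
  have h0 : (0:ℝ) ≤ Complex.abs z := AbsoluteValue.nonneg _ _
  have h1 : Complex.abs z ^ i ≤ (1 + Complex.abs z) ^ p.natDegree := by
    calc Complex.abs z ^ i ≤ (1 + Complex.abs z) ^ i :=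
          pow_le_pow_left₀ h0 (by linarith) i
      _ ≤ (1 + Complex.abs z) ^ p.natDegree :=
          pow_le_pow_right₀ (by linarith) (Finset.mem_range_succ_iff.1 hi)
  exact mul_le_mul_of_nonneg_left h1 (AbsoluteValue.nonneg _ _)

lemma sLower (s : Polynomial ℂ) (hs : ∀ ζ : ℂ, 0 ≤ ζ.im → s.eval ζ ≠ 0) :
    ∃ m : ℝ, 0 < m ∧ ∀ ζ : ℂ, 0 ≤ ζ.im → m ≤ Complex.abs (s.eval ζ) := by
  by_cases hdeg : 0 < s.degree
  · have ht : Tendsto (fun z : ℂ => ‖s.eval z‖) (Filter.cocompact ℂ) atTop :=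
      Polynomial.tendsto_norm_atTop s hdeg tendsto_norm_cocompact_atTop
    have hev : ∀ᶠ z : ℂ in Filter.cocompact ℂ, 1 ≤ ‖s.eval z‖ := ht.eventually_ge_atTop 1
    obtain ⟨K, hKc, hK⟩ := Filter.mem_cocompact.1 hev
    have hclosed : IsClosed {ζ : ℂ | 0 ≤ ζ.im} := isClosed_le continuous_const Complex.continuous_im
    have hScomp : IsCompact (K ∩ {ζ : ℂ | 0 ≤ ζ.im}) := hKc.inter_right hclosed
    by_cases hne : (K ∩ {ζ : ℂ | 0 ≤ ζ.im}).Nonempty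
    · obtain ⟨ζ₁, hζ₁S, hζ₁min⟩ := hScomp.exists_isMinOn hne
        ((Complex.continuous_abs.comp s.continuous).continuousOn)
      refine ⟨min 1 (Complex.abs (s.eval ζ₁)), ?_, ?_⟩
      · have : s.eval ζ₁ ≠ 0 := hs ζ₁ hζ₁S.2
        simp only [lt_min_iff]
        exact ⟨one_pos, AbsoluteValue.pos _ this⟩
      · intro ζ hζ
        by_cases hK' : ζ ∈ K
        · exact le_trans (min_le_right _ _) (hζ₁min ⟨hK', hζ⟩)
        · refine le_trans (min_le_left _ _) ?_
          simpa [Complex.norm_eq_abs] using hK (show ζ ∈ Kᶜ from hK')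
    · refine ⟨1, one_pos, fun ζ hζ => ?_⟩
      have hK' : ζ ∉ K := fun h => hne ⟨ζ, h, hζ⟩
      simpa [Complex.norm_eq_abs] using hK (show ζ ∈ Kᶜ from hK')
  · have hsC : s = Polynomial.C (s.coeff 0) := Polynomial.eq_C_of_degree_le_zero (not_lt.1 hdeg)
    have h0 : s.coeff 0 ≠ 0 := by
      have := hs Complex.I (by simp)
      rw [hsC] at this; simpa using this
    refine ⟨Complex.abs (s.coeff 0), AbsoluteValue.pos _ h0, fun ζ _ => ?_⟩
    rw [hsC]; simp




set_option maxHeartbeats 1000000 in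
lemma master_closed (n s : Polynomial ℂ)
    (hs : ∀ ζ : ℂ, 0 ≤ ζ.im → s.eval ζ ≠ 0)
    (hb : ∀ x : ℝ, Complex.abs (n.eval (x : ℂ)) ≤ Complex.abs (s.eval (x : ℂ))) :
    ∀ ζ : ℂ, 0 ≤ ζ.im → Complex.abs (n.eval ζ) ≤ Complex.abs (s.eval ζ) := by
  obtain ⟨C, hC0, hC⟩ := polyBound n
  obtain ⟨m, hm0, hm⟩ := sLower s hs
  intro ζ₀ hζ₀
  set K := n.natDegree with hKdef
  set ξ₀ : ℂ := -Complex.I * ζ₀ with hξ₀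
  have hIξ₀ : Complex.I * ξ₀ = ζ₀ := by rw [hξ₀]; ring_nf; simp [Complex.I_sq]
  have hreξ₀ : 0 ≤ ξ₀.re := by
    rw [hξ₀]; simpa using hζ₀
  have key : ∀ ε : ℝ, 0 < ε → ε ≤ 1 →
      Complex.abs (n.eval ζ₀) ≤
        Complex.abs (s.eval ζ₀) * Complex.abs (1 + (ε:ℂ) * ξ₀) ^ (K+1) := by
    intro ε hε hε1
    set F : ℂ → ℂ := fun ξ =>
      n.eval (Complex.I*ξ) / (s.eval (Complex.I*ξ) * (1 + (ε:ℂ)*ξ)^(K+1)) with hF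
    have him' : ∀ ξ : ℂ, 0 ≤ ξ.re → 0 ≤ (Complex.I*ξ).im := by
      intro ξ h; simpa using h
    have habs1 : ∀ ξ : ℂ, 0 ≤ ξ.re → (1:ℝ) ≤ Complex.abs (1 + (ε:ℂ)*ξ) := by
      intro ξ h
      have hre : (1:ℝ) ≤ (1 + (ε:ℂ)*ξ).re := by
        simp only [Complex.add_re, Complex.one_re, Complex.mul_re, Complex.ofReal_re,
          Complex.ofReal_im]
        nlinarith
      calc (1:ℝ) ≤ (1 + (ε:ℂ)*ξ).re := hre
        _ ≤ |(1 + (ε:ℂ)*ξ).re| := le_abs_self _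
        _ ≤ Complex.abs (1 + (ε:ℂ)*ξ) := Complex.abs_re_le_abs _
    have hden : ∀ ξ : ℂ, 0 ≤ ξ.re → s.eval (Complex.I*ξ) * (1 + (ε:ℂ)*ξ)^(K+1) ≠ 0 := by
      intro ξ h
      refine mul_ne_zero (hs _ (him' ξ h)) (pow_ne_zero _ ?_)
      intro h0
      have := habs1 ξ h
      rw [h0] at this
      norm_num at this
    -- differentiability
    have hdiff : ∀ ξ : ℂ, 0 ≤ ξ.re → DifferentiableAt ℂ F ξ := by
      intro ξ h
      apply DifferentiableAt.div
      · exact (n.differentiable.comp ((differentiable_const _).mul differentiable_id)).differentiableAt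
      · exact ((s.differentiable.comp ((differentiable_const _).mul differentiable_id)).differentiableAt).mul
          (((differentiable_const (1:ℂ)).add ((differentiable_const _).mul differentiable_id)).differentiableAt.pow _)
      · exact hden ξ h
    have hd : DiffContOnCl ℂ F {z : ℂ | 0 < z.re} := by
      constructor
      · exact fun ξ hξ => (hdiff ξ (le_of_lt hξ)).differentiableWithinAt
      · have hsub : closure {z : ℂ | 0 < z.re} ⊆ {z : ℂ | 0 ≤ z.re} :=
          closure_minimal (fun z hz => (le_of_lt (hz : 0 < z.re) : 0 ≤ z.re)) (isClosed_le continuous_const Complex.continuous_re)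
        exact fun ξ hξ => ((hdiff ξ (hsub hξ)).continuousAt).continuousWithinAt
    -- global bound on right half plane
    have hFb : ∀ ξ : ℂ, 0 ≤ ξ.re →
        ‖F ξ‖ ≤ C/m * (1 + Complex.abs ξ) ^ K := by
      intro ξ h
      rw [hF]
      simp only [norm_div, Complex.norm_eq_abs, _root_.map_mul, _root_.map_pow]
      have h1 : Complex.abs (n.eval (Complex.I*ξ)) ≤ C * (1 + Complex.abs (Complex.I*ξ)) ^ K := hC _
      have h2 : m ≤ Complex.abs (s.eval (Complex.I*ξ)) := hm _ (him' ξ h)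
      have h3 : (1:ℝ) ≤ Complex.abs (1 + (ε:ℂ)*ξ) := habs1 ξ h
      have habsI : Complex.abs (Complex.I*ξ) = Complex.abs ξ := by simp
      rw [habsI] at h1
      have hd1 : (1:ℝ) ≤ Complex.abs (1 + (ε:ℂ)*ξ) ^ (K+1) := one_le_pow₀ h3
      have hden_pos : 0 < Complex.abs (s.eval (Complex.I*ξ)) * Complex.abs (1 + (ε:ℂ)*ξ) ^ (K+1) := by
        nlinarith
      rw [div_le_iff₀ hden_pos]
      calc Complex.abs (n.eval (Complex.I*ξ)) ≤ C * (1 + Complex.abs ξ) ^ K := h1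
        _ = C/m * (1 + Complex.abs ξ) ^ K * (m * 1) := by field_simp
        _ ≤ C/m * (1 + Complex.abs ξ) ^ K *
              (Complex.abs (s.eval (Complex.I*ξ)) * Complex.abs (1 + (ε:ℂ)*ξ) ^ (K+1)) := by
            have hcm : 0 ≤ C/m * (1 + Complex.abs ξ) ^ K := by positivity
            have hmT : m * 1 ≤ Complex.abs (s.eval (Complex.I*ξ)) * Complex.abs (1 + (ε:ℂ)*ξ) ^ (K+1) := by
              nlinarith
            exact mul_le_mul_of_nonneg_left hmT hcm

    have hexp : ∃ c < (2:ℝ), ∃ B : ℝ, F =O[Bornology.cobounded ℂ ⊓ 𝓟 {z : ℂ | 0 < z.re}]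
        fun z => Real.exp (B * Complex.abs z ^ c) := by
      refine ⟨1, one_lt_two, (K:ℝ)+1, Asymptotics.isBigO_iff.2 ⟨C/m * Real.exp ((K:ℝ)+1), ?_⟩⟩
      rw [Filter.eventually_inf_principal]
      refine Filter.Eventually.of_forall fun ξ hξ => ?_
      have h1 : ‖F ξ‖ ≤ C/m * (1+Complex.abs ξ)^K := hFb ξ (le_of_lt hξ)
      have ht0 : (0:ℝ) ≤ Complex.abs ξ := AbsoluteValue.nonneg _ _
      have h2 : (1+Complex.abs ξ)^K ≤ Real.exp ((K:ℝ)+1) * Real.exp (((K:ℝ)+1) * Complex.abs ξ) := by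
        have e1 : 1 + Complex.abs ξ ≤ Real.exp (1 + Complex.abs ξ) := by
          have := Real.add_one_le_exp (1 + Complex.abs ξ); linarith
        calc (1+Complex.abs ξ)^K ≤ (Real.exp (1 + Complex.abs ξ))^K :=
              pow_le_pow_left₀ (by linarith) e1 K
          _ = Real.exp ((K:ℝ) * (1 + Complex.abs ξ)) := by
              rw [← Real.exp_nat_mul]
          _ ≤ Real.exp (((K:ℝ)+1) + ((K:ℝ)+1) * Complex.abs ξ) := by
              apply Real.exp_le_exp.2
              have hK0 : (0:ℝ) ≤ (K:ℝ) := Nat.cast_nonneg _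
              nlinarith
          _ = Real.exp ((K:ℝ)+1) * Real.exp (((K:ℝ)+1) * Complex.abs ξ) := by
              rw [← Real.exp_add]
      rw [Real.norm_eq_abs, Real.abs_exp, Real.rpow_one]
      calc ‖F ξ‖ ≤ C/m * (1+Complex.abs ξ)^K := h1
        _ ≤ C/m * (Real.exp ((K:ℝ)+1) * Real.exp (((K:ℝ)+1) * Complex.abs ξ)) :=
            mul_le_mul_of_nonneg_left h2 (by positivity)
        _ = C/m * Real.exp ((K:ℝ)+1) * Real.exp (((K:ℝ)+1) * Complex.abs ξ) := by ring
    have hre : IsBoundedUnder (· ≤ ·) atTop fun x : ℝ => ‖F (x:ℂ)‖ := by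
      refine ⟨C/(m * ε^(K+1)), ?_⟩
      rw [Filter.eventually_map]
      filter_upwards [Filter.eventually_ge_atTop (0:ℝ)] with x hx
      have hre' : 0 ≤ ((x:ℂ)).re := by simpa using hx
      have habsx : Complex.abs ((x:ℂ)) = x := by
        rw [Complex.abs_ofReal, _root_.abs_of_nonneg hx]
      have habs : Complex.abs (1 + (ε:ℂ)*(x:ℂ)) = 1 + ε*x := by
        rw [show (1 + (ε:ℂ)*(x:ℂ)) = ((1+ε*x : ℝ):ℂ) by push_cast; ring]
        rw [Complex.abs_ofReal, _root_.abs_of_pos (by nlinarith)]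
      have h1 : Complex.abs (n.eval (I*(x:ℂ))) ≤ C * (1 + x)^K := by
        have := hC (I*(x:ℂ))
        simpa [habsx] using this
      have h2 : m ≤ Complex.abs (s.eval (I*(x:ℂ))) := hm _ (him' _ hre')
      have hεx : ε*(1+x) ≤ 1 + ε*x := by nlinarith
      have hd2 : m * (ε*(1+x))^(K+1) ≤
          Complex.abs (s.eval (I*(x:ℂ))) * Complex.abs (1 + (ε:ℂ)*(x:ℂ))^(K+1) := by
        rw [habs]
        have hp : (ε*(1+x))^(K+1) ≤ (1+ε*x)^(K+1) :=
          pow_le_pow_left₀ (by nlinarith) hεx _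
        have h1x : (0:ℝ) < (1+ε*x)^(K+1) := by positivity
        nlinarith [pow_nonneg (show (0:ℝ) ≤ ε*(1+x) by nlinarith) (K+1)]
      have hdpos : (0:ℝ) < m * (ε*(1+x))^(K+1) := by positivity
      have hF1 : ‖F (x:ℂ)‖ ≤ (C * (1+x)^K) / (m * (ε*(1+x))^(K+1)) := by
        rw [hF]
        simp only [norm_div, Complex.norm_eq_abs, _root_.map_mul, _root_.map_pow]
        exact div_le_div₀ (by positivity) h1 hdpos hd2
      refine hF1.trans ?_
      have e2 : (C*(1+x)^K) / (m * (ε*(1+x))^(K+1)) = C/(m*ε^(K+1)) * (1/(1+x)) := by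
        rw [mul_pow, pow_succ]
        field_simp
        ring
      rw [e2]
      have h1x1 : 1/(1+x) ≤ 1 := by
        rw [div_le_one (by linarith)]; linarith
      calc C/(m*ε^(K+1)) * (1/(1+x)) ≤ C/(m*ε^(K+1)) * 1 :=
            mul_le_mul_of_nonneg_left h1x1 (by positivity)
        _ = C/(m*ε^(K+1)) := mul_one _
    have him : ∀ x : ℝ, ‖F ((x:ℂ)*I)‖ ≤ 1 := by
      intro x
      have hxI : I*((x:ℂ)*I) = (((-x:ℝ)):ℂ) := by
        push_cast
        rw [show Complex.I*((x:ℂ)*Complex.I) = (x:ℂ)*(Complex.I*Complex.I) by ring, Complex.I_mul_I]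
        ring
      have hsx : s.eval (I*((x:ℂ)*I)) ≠ 0 := by
        rw [hxI]; exact hs _ (by simp)
      have habs2 : (1:ℝ) ≤ Complex.abs (1 + (ε:ℂ)*((x:ℂ)*I)) := by
        have : (1 + (ε:ℂ)*((x:ℂ)*I)).re = 1 := by simp
        calc (1:ℝ) = (1 + (ε:ℂ)*((x:ℂ)*I)).re := this.symm
          _ ≤ |(1 + (ε:ℂ)*((x:ℂ)*I)).re| := le_abs_self _
          _ ≤ Complex.abs _ := Complex.abs_re_le_abs _
      rw [hF]
      simp only [norm_div, Complex.norm_eq_abs, _root_.map_mul, _root_.map_pow]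
      rw [div_le_one]
      · calc Complex.abs (n.eval (I*((x:ℂ)*I))) ≤ Complex.abs (s.eval (I*((x:ℂ)*I))) := by
              rw [hxI]; exact hb (-x)
          _ = Complex.abs (s.eval (I*((x:ℂ)*I))) * 1 := (mul_one _).symm
          _ ≤ Complex.abs (s.eval (I*((x:ℂ)*I))) * Complex.abs (1 + (ε:ℂ)*((x:ℂ)*I))^(K+1) := by
              have hp2 : (1:ℝ) ≤ Complex.abs (1 + (ε:ℂ)*((x:ℂ)*I))^(K+1) := one_le_pow₀ habs2
              exact mul_le_mul_of_nonneg_left hp2 (AbsoluteValue.nonneg _ _)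
      · have h2 : m ≤ Complex.abs (s.eval (I*((x:ℂ)*I))) := by
          rw [hxI]; exact hm _ (by simp)
        have hp2 : (1:ℝ) ≤ Complex.abs (1 + (ε:ℂ)*((x:ℂ)*I))^(K+1) := one_le_pow₀ habs2
        nlinarith
    have hPL := PhragmenLindelof.right_half_plane_of_bounded_on_real hd hexp hre him hreξ₀
    have hden₀ : s.eval ζ₀ * (1 + (ε:ℂ)*ξ₀)^(K+1) ≠ 0 := by
      have := hden ξ₀ hreξ₀
      rwa [hIξ₀] at this
    rw [hF] at hPL
    simp only [norm_div, Complex.norm_eq_abs, hIξ₀, _root_.map_mul, _root_.map_pow] at hPL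
    have hp1 : (1:ℝ) ≤ Complex.abs (1 + (ε:ℂ)*ξ₀)^(K+1) := one_le_pow₀ (habs1 ξ₀ hreξ₀)
    rw [div_le_one] at hPL
    · simpa using hPL
    · have h2 : m ≤ Complex.abs (s.eval ζ₀) := hm _ hζ₀
      nlinarith
  have hg : Tendsto
      (fun ε : ℝ => Complex.abs (s.eval ζ₀) * Complex.abs (1 + (ε:ℂ)*ξ₀)^(K+1))
      (nhdsWithin (0:ℝ) (Set.Ioi 0)) (nhds (Complex.abs (s.eval ζ₀))) := by
    have hc : Continuous fun ε : ℝ =>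
        Complex.abs (s.eval ζ₀) * Complex.abs (1 + (ε:ℂ)*ξ₀)^(K+1) :=
      continuous_const.mul ((Complex.continuous_abs.comp
        (continuous_const.add (Complex.continuous_ofReal.mul continuous_const))).pow _)
    have h0 := hc.tendsto 0
    simp only [Complex.ofReal_zero, zero_mul, add_zero, _root_.map_one, one_pow, mul_one] at h0
    exact h0.mono_left nhdsWithin_le_nhds
  refine ge_of_tendsto hg ?_
  filter_upwards [Ioo_mem_nhdsGT_of_mem (show (0:ℝ) ∈ Set.Ico (0:ℝ) 1 by norm_num)] with ε hε
  exact key ε hε.1 (le_of_lt hε.2)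




-- limit along positive reals
lemma le_lim0 {f g : ℝ → ℝ} (hf : Continuous f) (hg : Continuous g)
    (h : ∀ δ : ℝ, 0 < δ → f δ ≤ g δ) : f 0 ≤ g 0 := by
  have hft : Tendsto f (nhdsWithin (0:ℝ) (Set.Ioi 0)) (nhds (f 0)) :=
    (hf.tendsto 0).mono_left nhdsWithin_le_nhds
  have hgt : Tendsto g (nhdsWithin (0:ℝ) (Set.Ioi 0)) (nhds (g 0)) :=
    (hg.tendsto 0).mono_left nhdsWithin_le_nhds
  exact le_of_tendsto_of_tendsto hft hgt
    (Filter.eventually_iff_exists_mem.2 ⟨Set.Ioi 0, self_mem_nhdsWithin, fun δ hδ => h δ hδ⟩)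

-- the open-half-plane master lemma
lemma master_open : ∀ (N : ℕ) (n s : Polynomial ℂ), s.natDegree ≤ N →
    (∀ ζ : ℂ, 0 < ζ.im → s.eval ζ ≠ 0) →
    (∀ x : ℝ, Complex.abs (n.eval (x : ℂ)) ≤ Complex.abs (s.eval (x : ℂ))) →
    ∀ ζ : ℂ, 0 < ζ.im → Complex.abs (n.eval ζ) ≤ Complex.abs (s.eval ζ) := by
  intro N
  induction N with
  | zero =>
    intro n s hdeg hs hb
    -- s has degree 0; it cannot vanish at a real point unless identically zero
    have hs0 : s.eval Complex.I ≠ 0 := hs Complex.I (by simp)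
    have hsC : s = Polynomial.C (s.coeff 0) := Polynomial.eq_C_of_natDegree_le_zero hdeg
    have hc0 : s.coeff 0 ≠ 0 := by rw [hsC] at hs0; simpa using hs0
    have hsclosed : ∀ ζ : ℂ, 0 ≤ ζ.im → s.eval ζ ≠ 0 := by
      intro ζ _; rw [hsC]; simpa using hc0
    exact fun ζ hζ => master_closed n s hsclosed hb ζ (le_of_lt hζ)
  | succ N ih =>
    intro n s hdeg hs hb
    by_cases hroot : ∃ x : ℝ, s.eval (x:ℂ) = 0
    · obtain ⟨ρ, hρ⟩ := hroot
      have hnρ : n.eval ((ρ:ℝ):ℂ) = 0 := by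
        have := hb ρ
        rw [hρ] at this
        simpa using (AbsoluteValue.eq_zero Complex.abs).1 (le_antisymm (by simpa using this)
          (AbsoluteValue.nonneg _ _))
      have hsne : s ≠ 0 := by
        intro h0
        exact hs Complex.I (by simp) (by simp [h0])
      obtain ⟨s₁, hs₁⟩ := (Polynomial.dvd_iff_isRoot.2 (by simpa [Polynomial.IsRoot] using hρ) :
        (Polynomial.X - Polynomial.C ((ρ:ℝ):ℂ)) ∣ s)
      obtain ⟨n₁, hn₁⟩ := (Polynomial.dvd_iff_isRoot.2 (by simpa [Polynomial.IsRoot] using hnρ) :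
        (Polynomial.X - Polynomial.C ((ρ:ℝ):ℂ)) ∣ n)
      have hs₁ne : s₁ ≠ 0 := by
        intro h0; rw [h0, mul_zero] at hs₁; exact hsne hs₁
      have hdeg₁ : s₁.natDegree ≤ N := by
        have hXne : (Polynomial.X - Polynomial.C ((ρ:ℝ):ℂ)) ≠ 0 := Polynomial.X_sub_C_ne_zero _
        have : s.natDegree = 1 + s₁.natDegree := by
          rw [hs₁, Polynomial.natDegree_mul hXne hs₁ne, Polynomial.natDegree_X_sub_C]
        omega
      have hs₁pos : ∀ ζ : ℂ, 0 < ζ.im → s₁.eval ζ ≠ 0 := by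
        intro ζ hζ h0
        apply hs ζ hζ
        rw [hs₁]; simp [h0]
      have hb₁ : ∀ x : ℝ, Complex.abs (n₁.eval (x:ℂ)) ≤ Complex.abs (s₁.eval (x:ℂ)) := by
        -- away from ρ divide; at ρ by continuity
        have hne : ∀ x : ℝ, x ≠ ρ → Complex.abs (n₁.eval (x:ℂ)) ≤ Complex.abs (s₁.eval (x:ℂ)) := by
          intro x hx
          have hfac : Complex.abs ((x:ℂ) - ((ρ:ℝ):ℂ)) ≠ 0 := by
            have h1 : ((x:ℝ):ℂ) - ((ρ:ℝ):ℂ) ≠ 0 := by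
              rw [sub_ne_zero]
              exact_mod_cast hx
            exact AbsoluteValue.ne_zero _ h1
          have := hb x
          rw [hn₁, hs₁] at this
          simp only [Polynomial.eval_mul, _root_.map_mul, Polynomial.eval_sub, Polynomial.eval_X,
            Polynomial.eval_C] at this
          exact le_of_mul_le_mul_left (by
            calc Complex.abs ((x:ℂ) - ((ρ:ℝ):ℂ)) * Complex.abs (n₁.eval (x:ℂ)) ≤
                Complex.abs ((x:ℂ) - ((ρ:ℝ):ℂ)) * Complex.abs (s₁.eval (x:ℂ)) := this
            ) (lt_of_le_of_ne (AbsoluteValue.nonneg _ _) (Ne.symm hfac))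
        -- closed set argument
        intro x
        rcases eq_or_ne x ρ with rfl | hx
        · -- continuity: limit along x + δ
          have hf : Continuous fun δ : ℝ => Complex.abs (n₁.eval ((x + δ : ℝ):ℂ)) := by
            apply Complex.continuous_abs.comp
            exact n₁.continuous.comp (Complex.continuous_ofReal.comp (continuous_const.add continuous_id))
          have hg : Continuous fun δ : ℝ => Complex.abs (s₁.eval ((x + δ : ℝ):ℂ)) := by
            apply Complex.continuous_abs.comp
            exact s₁.continuous.comp (Complex.continuous_ofReal.comp (continuous_const.add continuous_id))
          have := le_lim0 hf hg (fun δ hδ => hne (x + δ) (by linarith))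
          simpa using this
        · exact hne x hx
      have hrec := ih n₁ s₁ hdeg₁ hs₁pos hb₁
      intro ζ hζ
      rw [hn₁, hs₁]
      simp only [Polynomial.eval_mul, _root_.map_mul]
      exact mul_le_mul_of_nonneg_left (hrec ζ hζ) (AbsoluteValue.nonneg _ _)
    · push_neg at hroot
      have hsclosed : ∀ ζ : ℂ, 0 ≤ ζ.im → s.eval ζ ≠ 0 := by
        intro ζ hζ
        rcases lt_or_eq_of_le hζ with h | h
        · exact hs ζ h
        · have : ζ = ((ζ.re : ℝ):ℂ) := by
            apply Complex.ext <;> simp [← h]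
          rw [this]; exact hroot ζ.re
      exact fun ζ hζ => master_closed n s hsclosed hb ζ (le_of_lt hζ)




lemma shift_eval (p : Polynomial ℂ) (δ : ℝ) (ξ : ℂ) :
    (p.comp (Polynomial.X + Polynomial.C ((δ:ℂ)*Complex.I))).eval ξ = p.eval (ξ + (δ:ℂ)*Complex.I) := by
  rw [Polynomial.eval_comp]; simp

lemma cont_absPolyLine (p : Polynomial ℂ) (w : ℂ) :
    Continuous fun δ : ℝ => Complex.abs (p.eval (w + (δ:ℂ)*Complex.I)) :=
  Complex.continuous_abs.comp (p.continuous.comp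
    (continuous_const.add (Complex.continuous_ofReal.mul continuous_const)))

lemma bnd_closure (a b : Polynomial ℂ)
    (hba : ∀ ζ : ℂ, 0 < ζ.im → Complex.abs (b.eval ζ) ≤ Complex.abs (a.eval ζ)) (x : ℝ) :
    Complex.abs (b.eval (x:ℂ)) ≤ Complex.abs (a.eval (x:ℂ)) := by
  have := le_lim0 (cont_absPolyLine b (x:ℂ)) (cont_absPolyLine a (x:ℂ))
    (fun δ hδ => hba _ (by simp [Complex.add_im]; positivity))
  simpa using this

lemma refl_bound (a c : Polynomial ℂ)
    (ha : ∀ ζ : ℂ, 0 < ζ.im → a.eval ζ ≠ 0)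
    (h : ∀ ζ : ℂ, 0 < ζ.im → Complex.abs (c.eval ζ) ≤ Complex.abs (a.eval ζ)) :
    ∀ ζ : ℂ, 0 < ζ.im →
      Complex.abs (c.eval (starRingEnd ℂ ζ)) ≤ Complex.abs (a.eval ζ) := by
  intro ζ hζ
  have him : ∀ (δ : ℝ), 0 < δ → ∀ ξ : ℂ, 0 ≤ ξ.im → 0 < (ξ + (δ:ℂ)*Complex.I).im := by
    intro δ hδ ξ h
    simp only [Complex.add_im, Complex.mul_im, Complex.ofReal_re, Complex.ofReal_im,
      Complex.I_re, Complex.I_im]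
    nlinarith
  have key : ∀ δ : ℝ, 0 < δ →
      Complex.abs (c.eval (starRingEnd ℂ ζ + (δ:ℂ)*Complex.I)) ≤
        Complex.abs (a.eval (ζ + (δ:ℂ)*Complex.I)) := by
    intro δ hδ
    have h1 := master_closed ((c.comp (Polynomial.X + Polynomial.C ((δ:ℂ)*Complex.I))).map (starRingEnd ℂ))
      (a.comp (Polynomial.X + Polynomial.C ((δ:ℂ)*Complex.I)))
      (fun ξ hξ => by rw [shift_eval]; exact ha _ (him δ hδ ξ hξ))
      (fun x => by
        rw [polyConjEval, shift_eval, shift_eval]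
        rw [show starRingEnd ℂ ((x:ℝ):ℂ) = ((x:ℝ):ℂ) from Complex.conj_ofReal x]
        rw [Complex.abs_conj]
        exact h _ (him δ hδ (x:ℂ) (by simp)))
      ζ (le_of_lt hζ)
    rw [polyConjEval, shift_eval] at h1
    rw [Complex.abs_conj] at h1
    rw [shift_eval] at h1
    -- h1 : abs (c.eval (conj ζ + conj(δ I)))?? careful: polyConjEval gives eval at conj ζ then shift
    exact h1
  have := le_lim0 (cont_absPolyLine c (starRingEnd ℂ ζ)) (cont_absPolyLine a ζ) key
  simpa using this

lemma mobius_bound (a b : Polynomial ℂ) (l : ℂ) (hl : Complex.abs l < 1)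
    (ha : ∀ ζ : ℂ, 0 < ζ.im → a.eval ζ ≠ 0)
    (hba : ∀ ζ : ℂ, 0 < ζ.im → Complex.abs (b.eval ζ) ≤ Complex.abs (a.eval ζ)) :
    ∀ ζ : ℂ, 0 < ζ.im →
      Complex.abs (b.eval ζ + l * starRingEnd ℂ (a.eval (starRingEnd ℂ ζ))) ≤
      Complex.abs (a.eval ζ + l * starRingEnd ℂ (b.eval (starRingEnd ℂ ζ))) := by
  have hNev : ∀ ξ : ℂ, (b + Polynomial.C l * (a.map (starRingEnd ℂ))).eval ξ
      = b.eval ξ + l * starRingEnd ℂ (a.eval (starRingEnd ℂ ξ)) := by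
    intro ξ; simp [polyConjEval]
  have hDev : ∀ ξ : ℂ, (a + Polynomial.C l * (b.map (starRingEnd ℂ))).eval ξ
      = a.eval ξ + l * starRingEnd ℂ (b.eval (starRingEnd ℂ ξ)) := by
    intro ξ; simp [polyConjEval]
  have hbrefl := refl_bound a b ha hba
  have hD0 : ∀ ζ : ℂ, 0 < ζ.im →
      (a + Polynomial.C l * (b.map (starRingEnd ℂ))).eval ζ ≠ 0 := by
    intro ζ hζ h0
    rw [hDev] at h0
    have haζ := ha ζ hζ
    have h2 : Complex.abs (a.eval ζ) = Complex.abs l * Complex.abs (b.eval (starRingEnd ℂ ζ)) := by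
      have : a.eval ζ = - (l * starRingEnd ℂ (b.eval (starRingEnd ℂ ζ))) := by linear_combination h0
      rw [this]
      simp [Complex.abs_conj]
    have h3 := hbrefl ζ hζ
    have h4 : 0 < Complex.abs (a.eval ζ) := AbsoluteValue.pos _ haζ
    nlinarith [AbsoluteValue.nonneg Complex.abs (b.eval (starRingEnd ℂ ζ)),
      AbsoluteValue.nonneg Complex.abs l]
  have hbnd : ∀ x : ℝ,
      Complex.abs ((b + Polynomial.C l * (a.map (starRingEnd ℂ))).eval (x:ℂ)) ≤
      Complex.abs ((a + Polynomial.C l * (b.map (starRingEnd ℂ))).eval (x:ℂ)) := by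
    intro x
    rw [hNev, hDev, show starRingEnd ℂ ((x:ℝ):ℂ) = ((x:ℝ):ℂ) from Complex.conj_ofReal x]
    set α := a.eval ((x:ℝ):ℂ)
    set β := b.eval ((x:ℝ):ℂ)
    have hβα : Complex.normSq β ≤ Complex.normSq α := by
      have := bnd_closure a b hba x
      have h1 : Complex.abs β ≤ Complex.abs α := this
      nlinarith [AbsoluteValue.nonneg Complex.abs β, AbsoluteValue.nonneg Complex.abs α,
        Complex.sq_abs β, Complex.sq_abs α]
    have hl2 : Complex.normSq l ≤ 1 := by
      nlinarith [Complex.sq_abs l, AbsoluteValue.nonneg Complex.abs l]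
    have hkey : Complex.normSq (β + l * starRingEnd ℂ α) ≤
        Complex.normSq (α + l * starRingEnd ℂ β) := by
      have hid : Complex.normSq (α + l * starRingEnd ℂ β) -
          Complex.normSq (β + l * starRingEnd ℂ α)
          = (1 - Complex.normSq l) * (Complex.normSq α - Complex.normSq β) := by
        simp only [Complex.normSq_apply, Complex.add_re, Complex.add_im, Complex.mul_re,
          Complex.mul_im, Complex.conj_re, Complex.conj_im]
        ring
      nlinarith
    calc Complex.abs (β + l * starRingEnd ℂ α)
        = Real.sqrt (Complex.normSq (β + l * starRingEnd ℂ α)) := Complex.abs_apply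
      _ ≤ Real.sqrt (Complex.normSq (α + l * starRingEnd ℂ β)) := Real.sqrt_le_sqrt hkey
      _ = Complex.abs (α + l * starRingEnd ℂ β) := Complex.abs_apply.symm
  intro ζ hζ
  have := master_open ((a + Polynomial.C l * (b.map (starRingEnd ℂ))).natDegree)
    (b + Polynomial.C l * (a.map (starRingEnd ℂ)))
    (a + Polynomial.C l * (b.map (starRingEnd ℂ))) le_rfl hD0 hbnd ζ hζ
  rw [hNev, hDev] at this
  exact this




-- slices
def sliceAt {d : ℕ} (z : Fin d → ℂ) (p : MvPolynomial (Fin d) ℂ) : Polynomial ℂ :=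
  MvPolynomial.aeval
    (fun k => Polynomial.C (((z k).re : ℂ)) + Polynomial.C (((z k).im : ℂ)) * Polynomial.X) p

lemma sliceAt_eval {d : ℕ} (z : Fin d → ℂ) (p : MvPolynomial (Fin d) ℂ) (ζ : ℂ) :
    (sliceAt z p).eval ζ
      = MvPolynomial.eval (fun k => ((z k).re : ℂ) + ((z k).im : ℂ) * ζ) p := by
  unfold sliceAt
  induction p using MvPolynomial.induction_on with
  | C a => simp
  | add p q hp hq => simp [hp, hq]
  | mul_X p k hp => simp [hp]

lemma slicePt_im {d : ℕ} (z : Fin d → ℂ) (hz : ∀ k, 0 < (z k).im) (ζ : ℂ) (hζ : 0 < ζ.im) :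
    ∀ k, 0 < (((z k).re : ℂ) + ((z k).im : ℂ) * ζ).im := by
  intro k
  simp only [Complex.add_im, Complex.ofReal_im, Complex.mul_im, Complex.ofReal_re, zero_add,
    zero_mul, add_zero]
  nlinarith [hz k]

lemma slicePt_I {d : ℕ} (z : Fin d → ℂ) :
    (fun k => ((z k).re : ℂ) + ((z k).im : ℂ) * Complex.I) = z := by
  funext k; exact Complex.re_add_im (z k)

lemma slicePt_negI {d : ℕ} (z : Fin d → ℂ) :
    (fun k => ((z k).re : ℂ) + ((z k).im : ℂ) * (starRingEnd ℂ Complex.I))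
      = fun k => starRingEnd ℂ (z k) := by
  funext k
  rw [Complex.conj_I]
  apply Complex.ext <;> simp

-- multivariable versions
lemma mv_refl_core {d : ℕ} (A B : MvPolynomial (Fin d) ℂ)
    (hA : ∀ y : Fin d → ℂ, (∀ k, 0 < (y k).im) → MvPolynomial.eval y A ≠ 0)
    (hBA : ∀ y : Fin d → ℂ, (∀ k, 0 < (y k).im) →
      Complex.abs (MvPolynomial.eval y B) ≤ Complex.abs (MvPolynomial.eval y A))
    (z : Fin d → ℂ) (hz : ∀ k, 0 < (z k).im) :
    Complex.abs (MvPolynomial.eval (fun k => starRingEnd ℂ (z k)) B)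
      ≤ Complex.abs (MvPolynomial.eval z A) := by
  have h := refl_bound (sliceAt z A) (sliceAt z B)
    (fun ζ hζ => by rw [sliceAt_eval]; exact hA _ (slicePt_im z hz ζ hζ))
    (fun ζ hζ => by rw [sliceAt_eval, sliceAt_eval]; exact hBA _ (slicePt_im z hz ζ hζ))
    Complex.I (by simp)
  rw [sliceAt_eval, sliceAt_eval, slicePt_negI, slicePt_I] at h
  exact h

lemma mv_mobius_core {d : ℕ} (A B : MvPolynomial (Fin d) ℂ)
    (hA : ∀ y : Fin d → ℂ, (∀ k, 0 < (y k).im) → MvPolynomial.eval y A ≠ 0)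
    (hBA : ∀ y : Fin d → ℂ, (∀ k, 0 < (y k).im) →
      Complex.abs (MvPolynomial.eval y B) ≤ Complex.abs (MvPolynomial.eval y A))
    (l : ℂ) (hl : Complex.abs l < 1)
    (z : Fin d → ℂ) (hz : ∀ k, 0 < (z k).im) :
    Complex.abs (MvPolynomial.eval z B
        + l * starRingEnd ℂ (MvPolynomial.eval (fun k => starRingEnd ℂ (z k)) A))
      ≤ Complex.abs (MvPolynomial.eval z A
        + l * starRingEnd ℂ (MvPolynomial.eval (fun k => starRingEnd ℂ (z k)) B)) := by
  have h := mobius_bound (sliceAt z A) (sliceAt z B) l hl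
    (fun ζ hζ => by rw [sliceAt_eval]; exact hA _ (slicePt_im z hz ζ hζ))
    (fun ζ hζ => by rw [sliceAt_eval, sliceAt_eval]; exact hBA _ (slicePt_im z hz ζ hζ))
    Complex.I (by simp)
  rw [sliceAt_eval, sliceAt_eval, sliceAt_eval, sliceAt_eval, slicePt_negI, slicePt_I] at h
  exact h




lemma abs_le_abs_of_normSq_le {x y : ℂ} (h : Complex.normSq x ≤ Complex.normSq y) :
    Complex.abs x ≤ Complex.abs y := by
  rw [Complex.abs_apply, Complex.abs_apply]
  exact Real.sqrt_le_sqrt h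

lemma normSq_le_normSq_of_abs_le {x y : ℂ} (h : Complex.abs x ≤ Complex.abs y) :
    Complex.normSq x ≤ Complex.normSq y := by
  nlinarith [Complex.sq_abs x, Complex.sq_abs y, AbsoluteValue.nonneg Complex.abs x,
    AbsoluteValue.nonneg Complex.abs y]

lemma abs_lt_abs_of_normSq_lt {x y : ℂ} (h : Complex.normSq x < Complex.normSq y) :
    Complex.abs x < Complex.abs y := by
  rw [Complex.abs_apply, Complex.abs_apply]
  exact Real.sqrt_lt_sqrt (Complex.normSq_nonneg _) h

lemma fourIm (x y : ℂ) :
    Complex.normSq (x + Complex.I*y) - Complex.normSq (x - Complex.I*y)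
      = 4 * (x * starRingEnd ℂ y).im := by
  simp only [Complex.normSq_apply, Complex.add_re, Complex.add_im, Complex.sub_re,
    Complex.sub_im, Complex.mul_re, Complex.mul_im, Complex.I_re, Complex.I_im,
    Complex.conj_re, Complex.conj_im]
  ring

lemma add_ne_zero_of_abs_lt {x y : ℂ} (h : Complex.abs y < Complex.abs x) : x + y ≠ 0 := by
  intro h0
  have : x = -y := by linear_combination h0
  rw [this] at h
  simp at h

lemma quad_conjTranspose {m : ℕ} (A : Matrix (Fin m) (Fin m) ℂ) (v : Fin m → ℂ) :
    dotProduct (star v) (Aᴴ *ᵥ v) = starRingEnd ℂ (dotProduct (star v) (A *ᵥ v)) := by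
  simp only [dotProduct, Matrix.mulVec, Matrix.conjTranspose_apply, Pi.star_apply, _root_.map_sum,
    Finset.mul_sum, _root_.map_mul, RCLike.star_def, Complex.conj_conj]
  rw [Finset.sum_comm]
  apply Finset.sum_congr rfl
  intro i _
  apply Finset.sum_congr rfl
  intro j _
  ring

lemma smul_quad {m : ℕ} (c : ℂ) (A : Matrix (Fin m) (Fin m) ℂ) (v : Fin m → ℂ) :
    dotProduct (star v) ((c • A) *ᵥ v) = c * dotProduct (star v) (A *ᵥ v) := by
  rw [Matrix.smul_mulVec, dotProduct_smul]
  rfl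

lemma imPart_quad {m : ℕ} (G : Matrix (Fin m) (Fin m) ℂ) (v : Fin m → ℂ) :
    dotProduct (star v) ((((2*Complex.I)⁻¹ : ℂ) • (G - Gᴴ)) *ᵥ v)
      = (((dotProduct (star v) (G *ᵥ v)).im : ℝ) : ℂ) := by
  rw [smul_quad, Matrix.sub_mulVec, dotProduct_sub, quad_conjTranspose]
  set s := dotProduct (star v) (G *ᵥ v)
  rw [Complex.sub_conj]
  rw [show ((2:ℝ) * s.im : ℝ) * Complex.I = (s.im : ℂ) * (2*Complex.I) by push_cast; ring]
  rw [inv_mul_eq_div, mul_div_assoc, div_self (by simp : (2:ℂ)*Complex.I ≠ 0), mul_one]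

lemma imPart_hermitian {m : ℕ} (G : Matrix (Fin m) (Fin m) ℂ) :
    (((2*Complex.I)⁻¹ : ℂ) • (G - Gᴴ)).IsHermitian := by
  unfold Matrix.IsHermitian
  rw [Matrix.conjTranspose_smul, Matrix.conjTranspose_sub, Matrix.conjTranspose_conjTranspose]
  rw [show (star ((2*Complex.I)⁻¹ : ℂ)) = -((2*Complex.I)⁻¹ : ℂ) by
    rw [star_inv₀]
    simp only [star_def, _root_.map_mul, Complex.conj_I, _root_.map_ofNat]
    rw [show (2:ℂ) * -Complex.I = -(2*Complex.I) by ring, inv_neg]]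
  rw [neg_smul, ← smul_neg, neg_sub]

lemma psd_of_quad {m : ℕ} (M : Matrix (Fin m) (Fin m) ℂ) (h1 : M.IsHermitian)
    (h2 : ∀ v : Fin m → ℂ, 0 ≤ dotProduct (star v) (M *ᵥ v)) : M.PosSemidef :=
  Matrix.PosSemidef.of_dotProduct_mulVec_nonneg h1 h2


/-- Generalized Darlington theorem: for a rational matrix
Nevanlinna function `f = P/q ∈ N_d^{m×m}` (with `P, q` coprime), the rational
function `g(z, z_{d+1}) = (z_{d+1}P₁(z) + P₂(z))/(z_{d+1}q₁(z) + q₂(z))` built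
from `P₁ = (P − P(z̄)^*)/(2i)`, `P₂ = (P + P(z̄)^*)/2`, `q₁ = (q − conj q(z̄))/(2i)`,
`q₂ = (q + conj q(z̄))/2` is a Cayley inner function of class `IN_{d+1}^{m×m}`
(defined and with positive semidefinite imaginary part on the upper
poly-half-plane `Π^{d+1}`, Hermitian-valued at real points where defined), and
`f(z) = g(z, i)` on `Π^d`. -/
theorem darlington_stmt8 (d m : ℕ)
    (P : Matrix (Fin m) (Fin m) (MvPolynomial (Fin d) ℂ))
    (q : MvPolynomial (Fin d) ℂ)
    (hcop : ∀ r : MvPolynomial (Fin d) ℂ, (∀ i j, r ∣ P i j) → r ∣ q → IsUnit r)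
    (hq : ∀ z : Fin d → ℂ, (∀ k, 0 < (z k).im) → MvPolynomial.eval z q ≠ 0)
    (hpos : ∀ z : Fin d → ℂ, (∀ k, 0 < (z k).im) →
        (((2 * Complex.I)⁻¹ : ℂ) •
          (((MvPolynomial.eval z q)⁻¹ •
              Matrix.of fun i j => MvPolynomial.eval z (P i j)) -
           ((MvPolynomial.eval z q)⁻¹ •
              Matrix.of fun i j => MvPolynomial.eval z (P i j))ᴴ)).PosSemidef) :
    ∀ (P₁ P₂ : Matrix (Fin m) (Fin m) (MvPolynomial (Fin d) ℂ))
      (q₁ q₂ : MvPolynomial (Fin d) ℂ),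
      P₁ = ((2 * Complex.I)⁻¹ : ℂ) •
          (P - Matrix.of fun i j => MvPolynomial.map (starRingEnd ℂ) (P j i)) →
      P₂ = ((2 : ℂ)⁻¹ : ℂ) •
          (P + Matrix.of fun i j => MvPolynomial.map (starRingEnd ℂ) (P j i)) →
      q₁ = ((2 * Complex.I)⁻¹ : ℂ) • (q - MvPolynomial.map (starRingEnd ℂ) q) →
      q₂ = ((2 : ℂ)⁻¹ : ℂ) • (q + MvPolynomial.map (starRingEnd ℂ) q) →
      ∀ g : (Fin d → ℂ) → ℂ → Matrix (Fin m) (Fin m) ℂ,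
        (∀ z w, g z w =
          (w * MvPolynomial.eval z q₁ + MvPolynomial.eval z q₂)⁻¹ •
            Matrix.of (fun i j =>
              w * MvPolynomial.eval z (P₁ i j) + MvPolynomial.eval z (P₂ i j))) →
        -- g ∈ N_{d+1}^{m×m}: defined on Π^{d+1} with psd imaginary part
        ((∀ (z : Fin d → ℂ) (w : ℂ), (∀ k, 0 < (z k).im) → 0 < w.im →
            (w * MvPolynomial.eval z q₁ + MvPolynomial.eval z q₂) ≠ 0 ∧
            (((2 * Complex.I)⁻¹ : ℂ) • (g z w - (g z w)ᴴ)).PosSemidef) ∧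
        -- Cayley inner: Hermitian values at real points where defined
         (∀ (x : Fin d → ℝ) (t : ℝ),
            ((t : ℂ) * MvPolynomial.eval (fun k => ((x k : ℝ) : ℂ)) q₁ +
              MvPolynomial.eval (fun k => ((x k : ℝ) : ℂ)) q₂) ≠ 0 →
            (g (fun k => ((x k : ℝ) : ℂ)) (t : ℂ)).IsHermitian) ∧
        -- f(z) = g(z, i) on Π^d
         (∀ z : Fin d → ℂ, (∀ k, 0 < (z k).im) →
            (MvPolynomial.eval z q)⁻¹ •
                Matrix.of (fun i j => MvPolynomial.eval z (P i j)) =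
              g z Complex.I)) := by
  intro P₁ P₂ q₁ q₂ hP₁ hP₂ hq₁ hq₂ g hg
  have inv2I : ((2*Complex.I)⁻¹ : ℂ) = -Complex.I/2 := by
    rw [mul_inv, Complex.inv_I]; ring
  -- evaluation formulas
  have hq1e : ∀ z : Fin d → ℂ, MvPolynomial.eval z q₁
      = ((2*Complex.I)⁻¹ : ℂ) * (MvPolynomial.eval z q
          - MvPolynomial.eval z (MvPolynomial.map (starRingEnd ℂ) q)) := by
    intro z; rw [hq₁, MvPolynomial.smul_eval, _root_.map_sub]
  have hq2e : ∀ z : Fin d → ℂ, MvPolynomial.eval z q₂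
      = ((2:ℂ)⁻¹) * (MvPolynomial.eval z q
          + MvPolynomial.eval z (MvPolynomial.map (starRingEnd ℂ) q)) := by
    intro z; rw [hq₂, MvPolynomial.smul_eval, _root_.map_add]
  have hP1e : ∀ (z : Fin d → ℂ) (i j : Fin m), MvPolynomial.eval z (P₁ i j)
      = ((2*Complex.I)⁻¹ : ℂ) * (MvPolynomial.eval z (P i j)
          - MvPolynomial.eval z (MvPolynomial.map (starRingEnd ℂ) (P j i))) := by
    intro z i j
    rw [hP₁, Matrix.smul_apply, Matrix.sub_apply, Matrix.of_apply, MvPolynomial.smul_eval,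
      _root_.map_sub]
  have hP2e : ∀ (z : Fin d → ℂ) (i j : Fin m), MvPolynomial.eval z (P₂ i j)
      = ((2:ℂ)⁻¹) * (MvPolynomial.eval z (P i j)
          + MvPolynomial.eval z (MvPolynomial.map (starRingEnd ℂ) (P j i))) := by
    intro z i j
    rw [hP₂, Matrix.smul_apply, Matrix.add_apply, Matrix.of_apply, MvPolynomial.smul_eval,
      _root_.map_add]
  -- quadratic form facts from hpos
  have hPosIm : ∀ (y : Fin d → ℂ), (∀ k, 0 < (y k).im) → ∀ v : Fin m → ℂ,
      0 ≤ ((dotProduct (star v)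
        ((Matrix.of fun i j => MvPolynomial.eval y (P i j)) *ᵥ v))
          * starRingEnd ℂ (MvPolynomial.eval y q)).im := by
    intro y hy v
    have h1 := (hpos y hy).dotProduct_mulVec_nonneg v
    rw [imPart_quad] at h1
    rw [Complex.zero_le_real] at h1
    set py := MvPolynomial.eval y q with hpy
    set uy := dotProduct (star v) ((Matrix.of fun i j => MvPolynomial.eval y (P i j)) *ᵥ v)
      with huy
    rw [smul_quad] at h1
    have hpy0 : py ≠ 0 := hq y hy
    have hup : uy * starRingEnd ℂ py = (py⁻¹ * uy) * ((Complex.normSq py : ℝ) : ℂ) := by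
      rw [show ((Complex.normSq py : ℝ) : ℂ) = py * starRingEnd ℂ py from
        (Complex.mul_conj py).symm]
      field_simp
    rw [hup]
    rw [Complex.mul_im]
    simp only [Complex.ofReal_re, Complex.ofReal_im, mul_zero, add_zero]
    nlinarith [Complex.normSq_nonneg py, h1]
  refine ⟨?_, ?_, ?_⟩
  · -- PART 1
    intro z w hz hw
    set zb : Fin d → ℂ := fun k => starRingEnd ℂ (z k) with hzb
    set p : ℂ := MvPolynomial.eval z q with hp
    set r : ℂ := MvPolynomial.eval zb q with hr
    have hp0 : p ≠ 0 := hq z hz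
    have hIw : (1 - Complex.I*w) ≠ 0 := by
      intro h0
      have hwI : w = -Complex.I := by
        linear_combination Complex.I * h0 + w * Complex.I_sq
      rw [hwI] at hw
      simp only [Complex.neg_im, Complex.I_im] at hw
      linarith
    set l : ℂ := (1 + Complex.I*w)/(1 - Complex.I*w) with hl_def
    set μ : ℂ := (1 - Complex.I*w)/2 with hμ_def
    have hμ0 : μ ≠ 0 := div_ne_zero hIw two_ne_zero
    have hl : Complex.abs l < 1 := by
      rw [hl_def, _root_.map_div₀]
      rw [div_lt_one (by
        have := AbsoluteValue.pos Complex.abs hIw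
        exact this)]
      apply abs_lt_abs_of_normSq_lt
      have : Complex.normSq (1 - Complex.I*w) - Complex.normSq (1 + Complex.I*w) = 4 * w.im := by
        simp only [Complex.normSq_apply, Complex.add_re, Complex.add_im, Complex.sub_re,
          Complex.sub_im, Complex.mul_re, Complex.mul_im, Complex.I_re, Complex.I_im,
          Complex.one_re, Complex.one_im]
        ring
      nlinarith
    have hp' : MvPolynomial.eval z (MvPolynomial.map (starRingEnd ℂ) q) = starRingEnd ℂ r := by
      rw [mvConjEval]
    have hrp : Complex.abs r ≤ Complex.abs p :=
      mv_refl_core q q hq (fun y hy => le_rfl) z hz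
    have hμl : μ * l = (1 + Complex.I*w)/2 := by
      rw [hμ_def, hl_def]
      field_simp
    have hdenval : w * MvPolynomial.eval z q₁ + MvPolynomial.eval z q₂
        = μ * (p + l * starRingEnd ℂ r) := by
      rw [hq1e, hq2e, hp', inv2I, hμ_def, hl_def, ← hp]
      have hIw' : (1 - w * Complex.I) ≠ 0 := by rwa [mul_comm]
      field_simp
      ring
    have hden0 : p + l * starRingEnd ℂ r ≠ 0 := by
      rcases eq_or_ne r 0 with h0 | h0
      · rw [h0]; simpa using hp0
      · apply add_ne_zero_of_abs_lt
        rw [_root_.map_mul, Complex.abs_conj]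
        have h1 : 0 < Complex.abs r := AbsoluteValue.pos _ h0
        nlinarith [AbsoluteValue.nonneg Complex.abs l]
    constructor
    · rw [hdenval]
      exact mul_ne_zero hμ0 hden0
    · -- PSD part
      refine Matrix.PosSemidef.of_dotProduct_mulVec_nonneg (imPart_hermitian _) fun v => ?_
      rw [imPart_quad, Complex.zero_le_real]
      -- scalar analysis with the vector v
      set Pv : MvPolynomial (Fin d) ℂ :=
        ∑ i, ∑ j, MvPolynomial.C (starRingEnd ℂ (v i) * v j) * P i j with hPv
      have hPve : ∀ y : Fin d → ℂ, MvPolynomial.eval y Pv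
          = dotProduct (star v) ((Matrix.of fun i j => MvPolynomial.eval y (P i j)) *ᵥ v) := by
        intro y
        rw [hPv]
        simp only [_root_.map_sum, _root_.map_mul, MvPolynomial.eval_C, dotProduct, Matrix.mulVec,
          Matrix.of_apply, Pi.star_apply, Finset.mul_sum, RCLike.star_def]
        apply Finset.sum_congr rfl
        intro i _
        apply Finset.sum_congr rfl
        intro j _
        ring
      set A : MvPolynomial (Fin d) ℂ := Pv + MvPolynomial.C Complex.I * q with hAdef
      set B : MvPolynomial (Fin d) ℂ := Pv - MvPolynomial.C Complex.I * q with hBdef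
      have hAe : ∀ y : Fin d → ℂ, MvPolynomial.eval y A
          = MvPolynomial.eval y Pv + Complex.I * MvPolynomial.eval y q := by
        intro y; rw [hAdef]; simp
      have hBe : ∀ y : Fin d → ℂ, MvPolynomial.eval y B
          = MvPolynomial.eval y Pv - Complex.I * MvPolynomial.eval y q := by
        intro y; rw [hBdef]; simp
      have hIm : ∀ y : Fin d → ℂ, (∀ k, 0 < (y k).im) →
          0 ≤ (MvPolynomial.eval y Pv * starRingEnd ℂ (MvPolynomial.eval y q)).im := by
        intro y hy
        rw [hPve y]
        exact hPosIm y hy v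
      have hA : ∀ y : Fin d → ℂ, (∀ k, 0 < (y k).im) → MvPolynomial.eval y A ≠ 0 := by
        intro y hy h0
        rw [hAe] at h0
        have hu : MvPolynomial.eval y Pv = -(Complex.I * MvPolynomial.eval y q) := by
          linear_combination h0
        have h2 := hIm y hy
        rw [hu] at h2
        have h3 : (-(Complex.I * MvPolynomial.eval y q) *
            starRingEnd ℂ (MvPolynomial.eval y q)).im
            = -Complex.normSq (MvPolynomial.eval y q) := by
          rw [show -(Complex.I * MvPolynomial.eval y q) * starRingEnd ℂ (MvPolynomial.eval y q)
              = -(Complex.I * ((Complex.normSq (MvPolynomial.eval y q) : ℝ) : ℂ)) by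
            rw [← Complex.mul_conj]; ring]
          simp
        rw [h3] at h2
        have h4 : Complex.normSq (MvPolynomial.eval y q) = 0 :=
          le_antisymm (by linarith) (Complex.normSq_nonneg _)
        exact hq y hy (Complex.normSq_eq_zero.1 h4)
      have hBA : ∀ y : Fin d → ℂ, (∀ k, 0 < (y k).im) →
          Complex.abs (MvPolynomial.eval y B) ≤ Complex.abs (MvPolynomial.eval y A) := by
        intro y hy
        rw [hAe, hBe]
        apply abs_le_abs_of_normSq_le
        have h1 := fourIm (MvPolynomial.eval y Pv) (MvPolynomial.eval y q)
        have h2 := hIm y hy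
        linarith
      have hmob := mv_mobius_core A B hA hBA l hl z hz
      set u : ℂ := MvPolynomial.eval z Pv with hu_def
      set V : ℂ := MvPolynomial.eval zb Pv with hV_def
      set N : ℂ := u + l * starRingEnd ℂ V with hN_def
      set Dn : ℂ := p + l * starRingEnd ℂ r with hDn_def
      have he1 : MvPolynomial.eval z B
          + l * starRingEnd ℂ (MvPolynomial.eval zb A) = N - Complex.I * Dn := by
        rw [hBe, hAe, hN_def, hDn_def, ← hu_def, ← hp, ← hV_def, ← hr]
        rw [_root_.map_add, _root_.map_mul, Complex.conj_I]
        ring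
      have he2 : MvPolynomial.eval z A
          + l * starRingEnd ℂ (MvPolynomial.eval zb B) = N + Complex.I * Dn := by
        rw [hBe, hAe, hN_def, hDn_def, ← hu_def, ← hp, ← hV_def, ← hr]
        rw [_root_.map_sub, _root_.map_mul, Complex.conj_I]
        ring
      rw [he1, he2] at hmob
      have hImND : 0 ≤ (N * starRingEnd ℂ Dn).im := by
        have h1 := fourIm N Dn
        have h2 := normSq_le_normSq_of_abs_le hmob
        linarith
      -- now compute the quadratic form of g z w
      rw [hg z w]
      set UE : Matrix (Fin m) (Fin m) ℂ := Matrix.of fun i j => MvPolynomial.eval z (P i j)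
        with hUE
      set UE' : Matrix (Fin m) (Fin m) ℂ := Matrix.of fun i j => MvPolynomial.eval zb (P i j)
        with hUE'
      have hNum : (Matrix.of fun i j =>
          w * MvPolynomial.eval z (P₁ i j) + MvPolynomial.eval z (P₂ i j))
          = μ • UE + (μ * l) • UE'ᴴ := by
        ext i j
        rw [Matrix.of_apply, Matrix.add_apply, Matrix.smul_apply, Matrix.smul_apply,
          Matrix.conjTranspose_apply, hUE, hUE', Matrix.of_apply, Matrix.of_apply]
        rw [hP1e, hP2e, inv2I, hμ_def, hμl]
        rw [show MvPolynomial.eval z (MvPolynomial.map (starRingEnd ℂ) (P j i))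
            = starRingEnd ℂ (MvPolynomial.eval zb (P j i)) from mvConjEval _ _]
        simp only [smul_eq_mul, RCLike.star_def]
        ring
      rw [hNum]
      rw [hdenval]
      rw [smul_quad]
      rw [Matrix.add_mulVec, dotProduct_add, smul_quad, smul_quad, quad_conjTranspose]
      have hUEu : dotProduct (star v) (UE *ᵥ v) = u := by
        rw [hu_def, hPve z, hUE]
      have hUEV : dotProduct (star v) (UE' *ᵥ v) = V := by
        rw [hV_def, hPve zb, hUE']
      rw [hUEu, hUEV]
      have hs : (μ * Dn)⁻¹ * (μ * u + μ * l * starRingEnd ℂ V) = Dn⁻¹ * N := by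
        rw [hN_def]
        field_simp
      have hDn0 : Dn ≠ 0 := hden0
      rw [hs]
      have hfin : (N * starRingEnd ℂ Dn).im = Complex.normSq Dn * (Dn⁻¹ * N).im := by
        rw [show N * starRingEnd ℂ Dn = (Dn⁻¹ * N) * ((Complex.normSq Dn : ℝ) : ℂ) by
          rw [show ((Complex.normSq Dn : ℝ) : ℂ) = Dn * starRingEnd ℂ Dn from
            (Complex.mul_conj Dn).symm]
          field_simp]
        rw [Complex.mul_im]
        simp only [Complex.ofReal_re, Complex.ofReal_im, mul_zero, add_zero]
        ring
      have hnsq : 0 < Complex.normSq Dn := by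
        rw [show (0:ℝ) < Complex.normSq Dn ↔ Complex.normSq Dn ≠ 0 from
          ⟨fun h => ne_of_gt h, fun h => lt_of_le_of_ne (Complex.normSq_nonneg _) (Ne.symm h)⟩]
        exact fun h => hDn0 (Complex.normSq_eq_zero.1 h)
      nlinarith [hImND, hfin]
  · -- PART 2 : Hermitian at real points
    intro x t hden
    set X : Fin d → ℂ := fun k => ((x k : ℝ) : ℂ) with hX
    have hXconj : (fun k => starRingEnd ℂ (X k)) = X := by
      funext k; rw [hX]; exact Complex.conj_ofReal _
    have hconjq : ∀ p : MvPolynomial (Fin d) ℂ,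
        MvPolynomial.eval X (MvPolynomial.map (starRingEnd ℂ) p)
          = starRingEnd ℂ (MvPolynomial.eval X p) := by
      intro p; rw [mvConjEval, hXconj]
    have hconj2 : starRingEnd ℂ (2:ℂ) = 2 := by
      rw [show ((2:ℂ)) = ((2:ℝ):ℂ) by norm_num]
      exact Complex.conj_ofReal _
    have hconjhalf : starRingEnd ℂ ((2:ℂ)⁻¹) = (2:ℂ)⁻¹ := by
      rw [_root_.map_inv₀, hconj2]
    have hcinv : starRingEnd ℂ ((2*Complex.I)⁻¹ : ℂ) = -((2*Complex.I)⁻¹ : ℂ) := by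
      rw [_root_.map_inv₀, _root_.map_mul, Complex.conj_I, hconj2]
      rw [show (2:ℂ) * -Complex.I = -(2*Complex.I) by ring, inv_neg]
    have hq1r : starRingEnd ℂ (MvPolynomial.eval X q₁) = MvPolynomial.eval X q₁ := by
      rw [hq1e, hconjq, _root_.map_mul, _root_.map_sub, Complex.conj_conj, hcinv]
      ring
    have hq2r : starRingEnd ℂ (MvPolynomial.eval X q₂) = MvPolynomial.eval X q₂ := by
      rw [hq2e, hconjq, _root_.map_mul, _root_.map_add, Complex.conj_conj, hconjhalf]
      ring
    have hP1r : ∀ i j : Fin m, starRingEnd ℂ (MvPolynomial.eval X (P₁ j i))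
        = MvPolynomial.eval X (P₁ i j) := by
      intro i j
      rw [hP1e, hP1e, hconjq, hconjq, _root_.map_mul, _root_.map_sub, Complex.conj_conj, hcinv]
      ring
    have hP2r : ∀ i j : Fin m, starRingEnd ℂ (MvPolynomial.eval X (P₂ j i))
        = MvPolynomial.eval X (P₂ i j) := by
      intro i j
      rw [hP2e, hP2e, hconjq, hconjq, _root_.map_mul, _root_.map_add, Complex.conj_conj, hconjhalf]
      ring
    rw [hg]
    unfold Matrix.IsHermitian
    ext i j
    rw [Matrix.conjTranspose_apply, Matrix.smul_apply, Matrix.smul_apply, Matrix.of_apply,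
      Matrix.of_apply]
    rw [RCLike.star_def, smul_eq_mul, smul_eq_mul, _root_.map_mul, _root_.map_inv₀, _root_.map_add,
      _root_.map_mul, hq1r, hq2r, _root_.map_add, _root_.map_mul, hP1r, hP2r,
      show starRingEnd ℂ ((t:ℝ):ℂ) = ((t:ℝ):ℂ) from Complex.conj_ofReal _]
  · -- PART 3 : g z I = f z
    intro z hz
    rw [hg z Complex.I]
    have hscal : Complex.I * MvPolynomial.eval z q₁ + MvPolynomial.eval z q₂
        = MvPolynomial.eval z q := by
      rw [hq1e, hq2e, inv2I]
      set a := MvPolynomial.eval z q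
      set b := MvPolynomial.eval z (MvPolynomial.map (starRingEnd ℂ) q)
      linear_combination (-(a - b)/2) * Complex.I_sq
    rw [hscal]
    congr 1
    funext i j
    simp only [Matrix.of_apply]
    rw [hP1e, hP2e, inv2I]
    set a := MvPolynomial.eval z (P i j)
    set b := MvPolynomial.eval z (MvPolynomial.map (starRingEnd ℂ) (P j i))
    linear_combination ((a - b)/2) * Complex.I_sq


end
end

section
/- Let f = P/q be a rational function in N_d^{m×m} with P a ℂ^{m×m}-valued polynomial and q a scalar polynomial, P and q coprime. Then for every row vector η ∈ ℂ^m, every real α, and every nonzero real pair (α, β), each nonzero polynomial of the pencil α·(z_{d+1}q₁(z) + q₂(z)) + β·(η(z_{d+1}P₁(z) + P₂(z))η^*) in d+1 variables is real stable, where P₁, P₂, q₁, q₂ are defined by P₁(z) = (P(z) − P(z̄)^*)/(2i), P₂(z) = (P(z) + P(z̄)^*)/2, q₁(z) = (q(z) − conj(q(z̄)))/(2i), q₂(z) = (q(z) + conj(q(z̄)))/2. -/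
open MvPolynomial Complex Matrix
open scoped ComplexOrder

namespace Darlington9Aux

lemma factor_le {lam a : ℂ} (hl : 0 < lam.im) (ha : a.im ≤ 0) :
    ‖lam - (starRingEnd ℂ) a‖ ≤ ‖lam - a‖ := by
  have h1 : Complex.normSq (lam - (starRingEnd ℂ) a) ≤ Complex.normSq (lam - a) := by
    simp only [Complex.normSq_apply, Complex.sub_re, Complex.sub_im, Complex.conj_re,
      Complex.conj_im]
    nlinarith [mul_nonneg hl.le (neg_nonneg.2 ha)]
  calc ‖lam - (starRingEnd ℂ) a‖ = Real.sqrt (Complex.normSq (lam - (starRingEnd ℂ) a)) := by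
        rw [Complex.norm_def]
    _ ≤ Real.sqrt (Complex.normSq (lam - a)) := Real.sqrt_le_sqrt h1
    _ = ‖lam - a‖ := by rw [Complex.norm_def]

lemma prod_le {lam : ℂ} (hl : 0 < lam.im) (s : Multiset ℂ) (hs : ∀ a ∈ s, a.im ≤ 0) :
    ‖(s.map (fun a => lam - (starRingEnd ℂ) a)).prod‖ ≤ ‖(s.map (fun a => lam - a)).prod‖ := by
  induction s using Multiset.induction_on with
  | empty => simp
  | cons a t ih =>
    simp only [Multiset.map_cons, Multiset.prod_cons, norm_mul]
    exact mul_le_mul (factor_le hl (hs a (Multiset.mem_cons_self a t)))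
      (ih fun b hb => hs b (Multiset.mem_cons_of_mem hb)) (norm_nonneg _) (norm_nonneg _)

lemma onevar (r : Polynomial ℂ) (hr : ∀ lam : ℂ, 0 < lam.im → r.eval lam ≠ 0)
    {lam : ℂ} (hl : 0 < lam.im) :
    ‖(starRingEnd ℂ) (r.eval ((starRingEnd ℂ) lam))‖ ≤ ‖r.eval lam‖ := by
  have hroots : ∀ a ∈ r.roots, a.im ≤ 0 := by
    intro a ha
    by_contra hlt
    push_neg at hlt
    exact hr a hlt ((Polynomial.mem_roots'.1 ha).2)
  have hfac := (IsAlgClosed.splits r).eq_prod_roots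
  have h1 : r.eval lam = r.leadingCoeff * ((r.roots.map fun a => lam - a)).prod := by
    conv_lhs => rw [hfac]
    rw [Polynomial.eval_mul, Polynomial.eval_C, Polynomial.eval_multiset_prod]
    simp [Multiset.map_map, Function.comp]
  have h2 : (starRingEnd ℂ) (r.eval ((starRingEnd ℂ) lam)) =
      (starRingEnd ℂ) r.leadingCoeff *
        ((r.roots.map fun a => lam - (starRingEnd ℂ) a)).prod := by
    conv_lhs => rw [hfac]
    rw [Polynomial.eval_mul, Polynomial.eval_C, Polynomial.eval_multiset_prod,
      _root_.map_mul (starRingEnd ℂ), map_multiset_prod]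
    simp [Multiset.map_map, Function.comp, map_sub]
  rw [h1, h2, norm_mul, norm_mul, RCLike.norm_conj]
  exact mul_le_mul_of_nonneg_left (prod_le hl r.roots hroots) (norm_nonneg _)

lemma eval_analytic {d : ℕ} (p : MvPolynomial (Fin d) ℂ) :
    AnalyticOnNhd ℂ (fun z : Fin d → ℂ => MvPolynomial.eval z p) Set.univ := by
  induction p using MvPolynomial.induction_on with
  | C a => simpa using (analyticOnNhd_const (v := a) (s := (Set.univ : Set (Fin d → ℂ))))
  | add p q hp hq => simp only [map_add]; exact hp.add hq
  | mul_X p i hp =>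
    simpa using hp.mul ((ContinuousLinearMap.proj (R := ℂ) (φ := fun _ : Fin d => ℂ) i).analyticOnNhd Set.univ)

lemma eval_differentiable {d : ℕ} (p : MvPolynomial (Fin d) ℂ) :
    Differentiable ℂ (fun z : Fin d → ℂ => MvPolynomial.eval z p) :=
  fun x => ((eval_analytic p) x (Set.mem_univ x)).differentiableAt

end Darlington9Aux


open Darlington9Aux

/-- for a rational matrix Nevanlinna function `f = P/q ∈ N_d^{m×m}`
(`P, q` coprime), for every row vector `η` and every nonzero real pair `(α, β)`,
each nonzero member `α(z_{d+1}q₁ + q₂) + β·η(z_{d+1}P₁ + P₂)η^*` of the pencil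
is real stable, i.e. nonvanishing on the upper poly-half-plane `Π^{d+1}`
("nonzero" being expressed as: the function is not identically zero). -/
theorem darlington_stmt9 (d m : ℕ)
    (P : Matrix (Fin m) (Fin m) (MvPolynomial (Fin d) ℂ))
    (q : MvPolynomial (Fin d) ℂ)
    (hcop : ∀ r : MvPolynomial (Fin d) ℂ, (∀ i j, r ∣ P i j) → r ∣ q → IsUnit r)
    (hq : ∀ z : Fin d → ℂ, (∀ k, 0 < (z k).im) → MvPolynomial.eval z q ≠ 0)
    (hpos : ∀ z : Fin d → ℂ, (∀ k, 0 < (z k).im) →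
        (((2 * Complex.I)⁻¹ : ℂ) •
          (((MvPolynomial.eval z q)⁻¹ •
              Matrix.of fun i j => MvPolynomial.eval z (P i j)) -
           ((MvPolynomial.eval z q)⁻¹ •
              Matrix.of fun i j => MvPolynomial.eval z (P i j))ᴴ)).PosSemidef) :
    ∀ (P₁ P₂ : Matrix (Fin m) (Fin m) (MvPolynomial (Fin d) ℂ))
      (q₁ q₂ : MvPolynomial (Fin d) ℂ),
      P₁ = ((2 * Complex.I)⁻¹ : ℂ) •
          (P - Matrix.of fun i j => MvPolynomial.map (starRingEnd ℂ) (P j i)) →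
      P₂ = ((2 : ℂ)⁻¹ : ℂ) •
          (P + Matrix.of fun i j => MvPolynomial.map (starRingEnd ℂ) (P j i)) →
      q₁ = ((2 * Complex.I)⁻¹ : ℂ) • (q - MvPolynomial.map (starRingEnd ℂ) q) →
      q₂ = ((2 : ℂ)⁻¹ : ℂ) • (q + MvPolynomial.map (starRingEnd ℂ) q) →
      ∀ (η : Fin m → ℂ) (α β : ℝ), (α, β) ≠ (0, 0) →
        ∀ F : (Fin d → ℂ) → ℂ → ℂ,
          (∀ z w, F z w =
            (α : ℂ) * (w * MvPolynomial.eval z q₁ + MvPolynomial.eval z q₂) +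
            (β : ℂ) * (η ⬝ᵥ (Matrix.of (fun i j =>
                w * MvPolynomial.eval z (P₁ i j) +
                  MvPolynomial.eval z (P₂ i j))).mulVec (star η))) →
          (∃ z w, F z w ≠ 0) →
          ∀ (z : Fin d → ℂ) (w : ℂ), (∀ k, 0 < (z k).im) → 0 < w.im →
            F z w ≠ 0 := by
  intro P₁ P₂ q₁ q₂ hP₁ hP₂ hq₁ hq₂ η α β hab F hF hFne z w hz hw
  subst hP₁ hP₂ hq₁ hq₂
  -- dot product expansion
  have hdot : ∀ (A : Matrix (Fin m) (Fin m) ℂ),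
      η ⬝ᵥ A.mulVec (star η) = ∑ i, ∑ j, (η i * (starRingEnd ℂ) (η j)) * A i j := by
    intro A
    simp only [dotProduct, Matrix.mulVec, Pi.star_apply, RCLike.star_def,
      Finset.mul_sum]
    exact Finset.sum_congr rfl fun i _ => Finset.sum_congr rfl fun j _ => by ring
  have hconjsum : ∀ (A : Fin m → Fin m → ℂ),
      (starRingEnd ℂ) (∑ i, ∑ j, (η i * (starRingEnd ℂ) (η j)) * A i j)
        = ∑ i, ∑ j, (η i * (starRingEnd ℂ) (η j)) * (starRingEnd ℂ) (A j i) := by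
    intro A
    simp only [map_sum, _root_.map_mul, Complex.conj_conj]
    rw [Finset.sum_comm]
    exact Finset.sum_congr rfl fun j _ => Finset.sum_congr rfl fun i _ => by ring
  have hconj : ∀ (p : MvPolynomial (Fin d) ℂ) (y : Fin d → ℂ),
      MvPolynomial.eval y (MvPolynomial.map (starRingEnd ℂ) p) =
        (starRingEnd ℂ) (MvPolynomial.eval (fun k => (starRingEnd ℂ) (y k)) p) := by
    intro p y
    have he : ∀ (v : Fin d → ℂ) (p : MvPolynomial (Fin d) ℂ),
        MvPolynomial.eval v p = MvPolynomial.eval₂ (RingHom.id ℂ) v p := fun _ _ => rfl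
    have h := MvPolynomial.eval₂_comp_left (starRingEnd ℂ) (RingHom.id ℂ)
      (fun k => (starRingEnd ℂ) (y k)) p
    simp only [RingHomCompTriple.comp_eq] at h
    have hy : (⇑(starRingEnd ℂ) ∘ fun k => (starRingEnd ℂ) (y k)) = y := by
      funext k; simp
    rw [hy] at h
    rw [MvPolynomial.eval_map, ← h, ← he]
  -- the polynomial g
  set Sp : MvPolynomial (Fin d) ℂ :=
    ∑ i, ∑ j, MvPolynomial.C (η i * (starRingEnd ℂ) (η j)) * P i j with hSp
  set g : MvPolynomial (Fin d) ℂ :=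
    MvPolynomial.C (α : ℂ) * q + MvPolynomial.C (β : ℂ) * Sp with hg
  have hSval : ∀ y : Fin d → ℂ, MvPolynomial.eval y Sp
      = ∑ i, ∑ j, (η i * (starRingEnd ℂ) (η j)) * MvPolynomial.eval y (P i j) := by
    intro y
    simp [hSp, map_sum]
  have hgval : ∀ y : Fin d → ℂ, MvPolynomial.eval y g
      = (α : ℂ) * MvPolynomial.eval y q + (β : ℂ) * MvPolynomial.eval y Sp := by
    intro y
    simp [hg]
  -- pencil sum splitting
  have hpencil : ∀ (v : ℂ) (A B : Fin m → Fin m → ℂ),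
      (β : ℂ) * ∑ i, ∑ j, (η i * (starRingEnd ℂ) (η j)) *
          (v * (-Complex.I / 2 * (A i j - B i j)) + 2⁻¹ * (A i j + B i j))
        = (1 - Complex.I * v) / 2 *
            ((β : ℂ) * ∑ i, ∑ j, (η i * (starRingEnd ℂ) (η j)) * A i j) +
          (1 + Complex.I * v) / 2 *
            ((β : ℂ) * ∑ i, ∑ j, (η i * (starRingEnd ℂ) (η j)) * B i j) := by
    intro v A B
    simp only [Finset.mul_sum, ← Finset.sum_add_distrib]
    exact Finset.sum_congr rfl fun i _ => Finset.sum_congr rfl fun j _ => by ring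
  -- the key pencil identity
  have hstar : ∀ (y : Fin d → ℂ) (v : ℂ), F y v =
      (1 - Complex.I * v) / 2 * MvPolynomial.eval y g +
      (1 + Complex.I * v) / 2 *
        (starRingEnd ℂ) (MvPolynomial.eval (fun k => (starRingEnd ℂ) (y k)) g) := by
    intro y v
    have h2I : ((2 * Complex.I)⁻¹ : ℂ) = -Complex.I / 2 := by
      rw [mul_inv, Complex.inv_I]; ring
    rw [hF y v, hdot]
    simp only [Matrix.smul_apply, Matrix.sub_apply, Matrix.add_apply, Matrix.of_apply,
      MvPolynomial.smul_eval, map_sub, map_add, smul_eq_mul, hconj, h2I]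
    rw [hgval y, hgval (fun k => (starRingEnd ℂ) (y k)), hSval y,
      hSval (fun k => (starRingEnd ℂ) (y k))]
    rw [_root_.map_add, _root_.map_mul, _root_.map_mul, Complex.conj_ofReal,
      Complex.conj_ofReal, hconjsum]
    rw [hpencil v (fun i j => MvPolynomial.eval y (P i j))
      (fun i j => (starRingEnd ℂ) (MvPolynomial.eval (fun k => (starRingEnd ℂ) (y k)) (P j i)))]
    ring
  -- imaginary part nonnegativity from hpos
  have him : ∀ y : Fin d → ℂ, (∀ k, 0 < (y k).im) →
      0 ≤ ((MvPolynomial.eval y q)⁻¹ * MvPolynomial.eval y Sp).im := by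
    intro y hy
    have hps := (hpos y hy).dotProduct_mulVec_nonneg (star η)
    rw [star_star] at hps
    set t : ℂ := (MvPolynomial.eval y q)⁻¹ * MvPolynomial.eval y Sp with ht
    have hval : η ⬝ᵥ (((2 * Complex.I)⁻¹ : ℂ) •
        (((MvPolynomial.eval y q)⁻¹ • Matrix.of fun i j => MvPolynomial.eval y (P i j)) -
         ((MvPolynomial.eval y q)⁻¹ • Matrix.of fun i j => MvPolynomial.eval y (P i j))ᴴ)).mulVec
          (star η) = ((t.im : ℝ) : ℂ) := by
      rw [hdot]
      have expand : ∀ i j, (((2 * Complex.I)⁻¹ : ℂ) •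
          (((MvPolynomial.eval y q)⁻¹ • Matrix.of fun i j => MvPolynomial.eval y (P i j)) -
           ((MvPolynomial.eval y q)⁻¹ • Matrix.of fun i j => MvPolynomial.eval y (P i j))ᴴ)) i j
          = (2 * Complex.I)⁻¹ * ((MvPolynomial.eval y q)⁻¹ * MvPolynomial.eval y (P i j) -
              (starRingEnd ℂ) ((MvPolynomial.eval y q)⁻¹ * MvPolynomial.eval y (P j i))) := by
        intro i j
        simp [Matrix.smul_apply, Matrix.sub_apply, Matrix.conjTranspose_apply, Matrix.of_apply,
          smul_eq_mul, mul_sub]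
      simp only [expand]
      have hsplit : ∑ i, ∑ j, (η i * (starRingEnd ℂ) (η j)) *
          ((2 * Complex.I)⁻¹ * ((MvPolynomial.eval y q)⁻¹ * MvPolynomial.eval y (P i j) -
            (starRingEnd ℂ) ((MvPolynomial.eval y q)⁻¹ * MvPolynomial.eval y (P j i))))
          = (2 * Complex.I)⁻¹ *
            ((∑ i, ∑ j, (η i * (starRingEnd ℂ) (η j)) *
                ((MvPolynomial.eval y q)⁻¹ * MvPolynomial.eval y (P i j))) -
             (∑ i, ∑ j, (η i * (starRingEnd ℂ) (η j)) *
                (starRingEnd ℂ) ((MvPolynomial.eval y q)⁻¹ * MvPolynomial.eval y (P j i)))) := by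
        simp only [Finset.mul_sum, ← Finset.sum_sub_distrib]
        exact Finset.sum_congr rfl fun i _ => Finset.sum_congr rfl fun j _ => by ring
      rw [hsplit, ← hconjsum (fun i j => (MvPolynomial.eval y q)⁻¹ * MvPolynomial.eval y (P i j))]
      have hsum_t : ∑ i, ∑ j, (η i * (starRingEnd ℂ) (η j)) *
          ((MvPolynomial.eval y q)⁻¹ * MvPolynomial.eval y (P i j)) = t := by
        rw [ht, hSval y, Finset.mul_sum]
        refine Finset.sum_congr rfl fun i _ => ?_
        rw [Finset.mul_sum]
        exact Finset.sum_congr rfl fun j _ => by ring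
      rw [hsum_t, Complex.im_eq_sub_conj t]
      rw [div_eq_inv_mul]
    rw [hval] at hps
    exact Complex.zero_le_real.1 hps
  -- main case split
  by_cases hvan : ∃ y : Fin d → ℂ, (∀ k, 0 < (y k).im) ∧ MvPolynomial.eval y g = 0
  · exfalso
    obtain ⟨z₁, hz₁, hgz₁⟩ := hvan
    by_cases hb : β = 0
    · -- then α ≠ 0 and g = α q nonvanishing
      have ha : α ≠ 0 := by
        intro h0
        exact hab (by rw [h0, hb])
      rw [hgval z₁, hb] at hgz₁
      simp only [Complex.ofReal_zero, zero_mul, add_zero] at hgz₁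
      rcases mul_eq_zero.1 hgz₁ with h | h
      · exact ha (by exact_mod_cast h)
      · exact hq z₁ hz₁ h
    · -- maximum modulus argument
      have hbC : (β : ℂ) ≠ 0 := Complex.ofReal_ne_zero.2 hb
      set U : Set (Fin d → ℂ) := {y | ∀ k, 0 < (y k).im} with hU
      have hz₁U : z₁ ∈ U := hz₁
      have hUopen : IsOpen U := by
        have : U = ⋂ k, {y : Fin d → ℂ | 0 < (y k).im} := by
          ext y; simp [hU, Set.mem_iInter]
        rw [this]
        exact isOpen_iInter_of_finite fun k =>
          isOpen_lt continuous_const (Complex.continuous_im.comp (continuous_apply k))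
      have hUconv : Convex ℝ U := by
        have : U = ⋂ k, (LinearMap.proj (R := ℝ) (φ := fun _ : Fin d => ℂ) k) ⁻¹'
            {c : ℂ | 0 < c.im} := by
          ext y; simp [hU, Set.mem_iInter]
        rw [this]
        exact convex_iInter fun k =>
          (convex_halfSpace_im_gt 0).linear_preimage _
      set c : ℂ := ((-(α / β) : ℝ) : ℂ) with hc
      have hcim : c.im = 0 := by simp [hc]
      set φf : (Fin d → ℂ) → ℂ :=
        fun y => (MvPolynomial.eval y q)⁻¹ * MvPolynomial.eval y Sp with hφf
      have hφz₁ : φf z₁ = c := by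
        have h0 : (α : ℂ) * MvPolynomial.eval z₁ q + (β : ℂ) * MvPolynomial.eval z₁ Sp = 0 := by
          rw [← hgval]; exact hgz₁
        have hqz₁ : MvPolynomial.eval z₁ q ≠ 0 := hq z₁ hz₁
        have hS : MvPolynomial.eval z₁ Sp = -((α:ℂ)/(β:ℂ)) * MvPolynomial.eval z₁ q := by
          have h1 : MvPolynomial.eval z₁ Sp = (-(α:ℂ) * MvPolynomial.eval z₁ q) / (β:ℂ) := by
            rw [eq_div_iff hbC]
            linear_combination h0
          rw [h1]; ring
        show (MvPolynomial.eval z₁ q)⁻¹ * MvPolynomial.eval z₁ Sp = c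
        rw [hS, hc]
        push_cast
        field_simp [hqz₁, hbC]
      set f : (Fin d → ℂ) → ℂ := fun y => (φf y - c + Complex.I)⁻¹ with hf
      have hdenom : ∀ y ∈ U, 1 ≤ (φf y - c + Complex.I).im := by
        intro y hy
        have := him y hy
        simp only [Complex.add_im, Complex.sub_im, Complex.I_im, hcim]
        rw [hφf]
        linarith
      have hdne : ∀ y ∈ U, φf y - c + Complex.I ≠ 0 := by
        intro y hy h0
        have := hdenom y hy
        rw [h0] at this
        simp at this
        linarith
      have hnorm1 : ∀ y ∈ U, 1 ≤ ‖φf y - c + Complex.I‖ := by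
        intro y hy
        calc (1:ℝ) ≤ (φf y - c + Complex.I).im := hdenom y hy
          _ ≤ |(φf y - c + Complex.I).im| := le_abs_self _
          _ ≤ ‖φf y - c + Complex.I‖ := Complex.abs_im_le_norm _
      have hfz₁ : f z₁ = Complex.I⁻¹ := by
        rw [hf]; simp only [hφz₁]; rw [sub_self, zero_add]
      have hmax : IsMaxOn (norm ∘ f) U z₁ := by
        intro y hy
        simp only [Function.comp_apply, hfz₁, norm_inv, Complex.norm_I, inv_one]
        rw [hf]
        simp only [norm_inv]
        exact inv_le_one_of_one_le₀ (hnorm1 y hy)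
      have hdiff : DifferentiableOn ℂ f U := by
        have h1 : DifferentiableOn ℂ (fun y => MvPolynomial.eval y q) U :=
          (eval_differentiable q).differentiableOn
        have h2 : DifferentiableOn ℂ (fun y => MvPolynomial.eval y Sp) U :=
          (eval_differentiable Sp).differentiableOn
        have hφd : DifferentiableOn ℂ φf U :=
          (h1.inv fun y hy => hq y hy).mul h2
        exact ((hφd.sub_const c).add_const Complex.I).inv hdne
      have heq := Complex.eqOn_of_isPreconnected_of_isMaxOn_norm hUconv.isPreconnected
        hUopen hdiff hz₁U hmax
      -- deduce eval g vanishes on U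
      have hg0 : Set.EqOn (fun y => MvPolynomial.eval y g) 0 U := by
        intro y hy
        have hfy : f y = Complex.I⁻¹ := by
          have := heq hy
          rwa [Function.const_apply, hfz₁] at this
        have hdy : φf y - c + Complex.I = Complex.I := inv_injective hfy
        have hφy : φf y = c := by linear_combination hdy
        have hqy : MvPolynomial.eval y q ≠ 0 := hq y hy
        have hSy : MvPolynomial.eval y Sp = c * MvPolynomial.eval y q := by
          have h2 : (MvPolynomial.eval y q)⁻¹ * MvPolynomial.eval y Sp = c := hφy
          rw [inv_mul_eq_div, div_eq_iff hqy] at h2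
          exact h2
        show MvPolynomial.eval y g = 0
        rw [hgval y, hSy, hc]
        push_cast
        field_simp
        ring
      have hall : ∀ y : Fin d → ℂ, MvPolynomial.eval y g = 0 := by
        have hev : (fun y : Fin d → ℂ => MvPolynomial.eval y g) =ᶠ[nhds z₁] 0 :=
          Filter.eventuallyEq_of_mem (hUopen.mem_nhds hz₁U) hg0
        have hcont := (eval_analytic g).eqOn_zero_of_preconnected_of_eventuallyEq_zero
          isPreconnected_univ (Set.mem_univ z₁) hev
        intro y
        exact hcont (Set.mem_univ y)
      obtain ⟨z', w', hne'⟩ := hFne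
      apply hne'
      rw [hstar z' w', hall, hall]
      simp
  · push_neg at hvan
    have hgz : MvPolynomial.eval z g ≠ 0 := hvan z hz
    set r : Polynomial ℂ := MvPolynomial.eval₂ (Polynomial.C)
      (fun k => Polynomial.C ((z k).re : ℂ) + Polynomial.C ((z k).im : ℂ) * Polynomial.X) g
      with hr
    have hline : ∀ lam : ℂ, r.eval lam =
        MvPolynomial.eval (fun k => ((z k).re : ℂ) + ((z k).im : ℂ) * lam) g := by
      intro lam
      have h := MvPolynomial.eval₂_comp_left (Polynomial.evalRingHom lam)
        (Polynomial.C : ℂ →+* Polynomial ℂ)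
        (fun k => Polynomial.C ((z k).re : ℂ) + Polynomial.C ((z k).im : ℂ) * Polynomial.X) g
      have hid : (Polynomial.evalRingHom lam).comp (Polynomial.C : ℂ →+* Polynomial ℂ)
          = RingHom.id ℂ := by
        ext x; simp
      rw [hid] at h
      have he : ∀ (v : Fin d → ℂ) (p : MvPolynomial (Fin d) ℂ),
          MvPolynomial.eval v p = MvPolynomial.eval₂ (RingHom.id ℂ) v p := fun _ _ => rfl
      rw [hr]
      show (Polynomial.evalRingHom lam) (MvPolynomial.eval₂ Polynomial.C _ g) = _
      rw [h, he]
      congr 1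
      funext k
      simp [Function.comp]
    have hrnz : ∀ lam : ℂ, 0 < lam.im → r.eval lam ≠ 0 := by
      intro lam hlam
      rw [hline]
      apply hvan
      intro k
      simp only [Complex.add_im, Complex.ofReal_im, Complex.mul_im, Complex.ofReal_re,
        zero_add, zero_mul, add_zero]
      exact mul_pos (hz k) hlam
    have hIim : (0:ℝ) < Complex.I.im := by simp
    have hkey := onevar r hrnz hIim
    have hevI : r.eval Complex.I = MvPolynomial.eval z g := by
      rw [hline]
      have hzz : (fun k => ((z k).re : ℂ) + ((z k).im : ℂ) * Complex.I) = z := by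
        funext k
        exact Complex.re_add_im (z k)
      rw [hzz]
    have hevmI : r.eval ((starRingEnd ℂ) Complex.I)
        = MvPolynomial.eval (fun k => (starRingEnd ℂ) (z k)) g := by
      rw [Complex.conj_I, hline]
      have hzz : (fun k => ((z k).re : ℂ) + ((z k).im : ℂ) * (-Complex.I))
          = fun k => (starRingEnd ℂ) (z k) := by
        funext k
        apply Complex.ext <;> simp
      rw [hzz]
    rw [hevmI, hevI] at hkey
    have hsq : Complex.normSq (1 + Complex.I * w) < Complex.normSq (1 - Complex.I * w) := by
      simp only [Complex.normSq_apply, Complex.add_re, Complex.sub_re, Complex.one_re,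
        Complex.mul_re, Complex.I_re, Complex.I_im, Complex.add_im, Complex.sub_im,
        Complex.one_im, Complex.mul_im]
      nlinarith [hw]
    have hc12 : ‖(1 + Complex.I * w) / 2‖ < ‖(1 - Complex.I * w) / 2‖ := by
      rw [norm_div, norm_div]
      refine div_lt_div_of_pos_right ?_ (by norm_num)
      rw [Complex.norm_def, Complex.norm_def]
      exact Real.sqrt_lt_sqrt (Complex.normSq_nonneg _) hsq
    intro hF0
    rw [hstar z w] at hF0
    have h1 : (1 - Complex.I * w) / 2 * MvPolynomial.eval z g
        = -((1 + Complex.I * w) / 2 *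
            (starRingEnd ℂ) (MvPolynomial.eval (fun k => (starRingEnd ℂ) (z k)) g)) := by
      linear_combination hF0
    have h2 : ‖(1 - Complex.I * w) / 2‖ * ‖MvPolynomial.eval z g‖
        = ‖(1 + Complex.I * w) / 2‖ *
            ‖(starRingEnd ℂ) (MvPolynomial.eval (fun k => (starRingEnd ℂ) (z k)) g)‖ := by
      rw [← norm_mul, ← norm_mul, h1, norm_neg]
    have h3 := mul_le_mul_of_nonneg_left hkey
      (norm_nonneg ((1 + Complex.I * w) / 2))
    have h4 := mul_lt_mul_of_pos_right hc12 (norm_pos_iff.2 hgz)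
    linarith
end

section
/- Let a, b, c, d be scalar rational functions of one variable such that Z(λ) = [[a(λ), b(λ)],[c(λ), d(λ)]] is a 2×2 positive real Cayley inner matrix function (Re Z(λ) ⪰ 0 for Re λ > 0, and Re Z vanishes on the imaginary axis). Then the function of two variables g(λ, μ) = a(λ) − b(λ)(d(λ) + μ)^{-1} c(λ) is positive real and Cayley inner on the right bi-half-plane Ω² = {(λ, μ) : Re λ > 0, Re μ > 0}; in particular, for any constant r > 0, the one-variable function z(λ) = g(λ, r) is positive real. -/
open Complex Matrix
open scoped ComplexOrder

lemma quad_nonneg (a b c d w : ℂ)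
    (h : (((2 : ℂ)⁻¹ : ℂ) • (!![a,b;c,d] + (!![a,b;c,d])ᴴ)).PosSemidef) :
    0 ≤ (a + b*w + (starRingEnd ℂ) w * c + (starRingEnd ℂ) w * d * w).re := by
  have := h.dotProduct_mulVec_nonneg ![1, w]
  simp only [Matrix.mulVec, dotProduct, Fin.sum_univ_two, Matrix.conjTranspose_apply,
    Complex.le_def, Matrix.smul_apply, Matrix.add_apply, Matrix.cons_val', Matrix.cons_val_zero,
    Matrix.cons_val_one, Matrix.head_cons, Matrix.head_fin_const, Matrix.empty_val',
    Matrix.cons_val_fin_one, Pi.star_apply, Matrix.of_apply] at this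
  obtain ⟨h1, h2⟩ := this
  simp only [smul_eq_mul, star_one, one_mul, mul_one, Complex.star_def] at h1
  rw [show ((2:ℂ)⁻¹) = ((2⁻¹:ℝ):ℂ) from by norm_num] at h1
  simp only [Complex.add_re, Complex.mul_re, Complex.mul_im, Complex.add_im, Complex.conj_re,
    Complex.conj_im, Complex.ofReal_re, Complex.ofReal_im, Complex.zero_re] at h1 ⊢
  ring_nf at h1 ⊢
  linarith

lemma quad_zero (a b c d w : ℂ)
    (h : !![a,b;c,d] + (!![a,b;c,d])ᴴ = 0) :
    (a + b*w + (starRingEnd ℂ) w * c + (starRingEnd ℂ) w * d * w).re = 0 := by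
  have ha := congrFun (congrFun h 0) 0
  have hb := congrFun (congrFun h 0) 1
  have hc := congrFun (congrFun h 1) 0
  have hd := congrFun (congrFun h 1) 1
  simp only [Matrix.add_apply, Matrix.conjTranspose_apply, Matrix.cons_val', Matrix.cons_val_zero,
    Matrix.cons_val_one, Matrix.head_cons, Matrix.head_fin_const, Matrix.empty_val',
    Matrix.cons_val_fin_one, Matrix.zero_apply, Complex.star_def, Matrix.of_apply] at ha hb hc hd
  simp only [Complex.ext_iff, Complex.add_re, Complex.add_im, Complex.conj_re, Complex.conj_im,
    Complex.zero_re, Complex.zero_im] at ha hb hc hd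
  simp only [Complex.add_re, Complex.mul_re, Complex.mul_im, Complex.conj_re, Complex.conj_im]
  obtain ⟨ha1, ha2⟩ := ha; obtain ⟨hb1, hb2⟩ := hb; obtain ⟨hc1, hc2⟩ := hc; obtain ⟨hd1, hd2⟩ := hd
  linear_combination ha1/2 + w.re*hb1 - w.im*hb2 + (w.re^2+w.im^2)/2 * hd1

lemma schur_id (a b c d mu : ℂ) (h : d + mu ≠ 0) :
    (a - b * (d + mu)⁻¹ * c).re =
      (a + b * (-(d+mu)⁻¹*c) + (starRingEnd ℂ) (-(d+mu)⁻¹*c) * c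
        + (starRingEnd ℂ) (-(d+mu)⁻¹*c) * d * (-(d+mu)⁻¹*c)).re
      + mu.re * Complex.normSq (-(d+mu)⁻¹*c) := by
  have hw : d * (-(d+mu)⁻¹*c) + mu * (-(d+mu)⁻¹*c) = -c := by
    field_simp
    ring
  have key : a - b * (d + mu)⁻¹ * c =
      (a + b * (-(d+mu)⁻¹*c) + (starRingEnd ℂ) (-(d+mu)⁻¹*c) * c
        + (starRingEnd ℂ) (-(d+mu)⁻¹*c) * d * (-(d+mu)⁻¹*c))
      + mu * ((starRingEnd ℂ) (-(d+mu)⁻¹*c) * (-(d+mu)⁻¹*c)) := by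
    linear_combination (-(starRingEnd ℂ) (-(d+mu)⁻¹*c)) * hw
  rw [key, Complex.add_re]
  congr 1
  rw [show (starRingEnd ℂ) (-(d+mu)⁻¹*c) * (-(d+mu)⁻¹*c)
      = (Complex.normSq (-(d+mu)⁻¹*c) : ℂ) from by
    rw [Complex.normSq_eq_conj_mul_self]]
  simp [Complex.mul_re]

/-- A function `ℂ → ℂ` is rational if it agrees with a quotient of polynomials
wherever the denominator does not vanish. -/
def IsRationalFn (f : ℂ → ℂ) : Prop :=
  ∃ p q : Polynomial ℂ, q ≠ 0 ∧
    ∀ l : ℂ, q.eval l ≠ 0 → f l = p.eval l / q.eval l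

/-- Darlington, classical form: if
`Z(l) = [[a(l), b(l)], [c(l), d(l)]]` is a `2×2` positive real Cayley inner
rational matrix function, then the Schur complement
`g(l, mu) = a(l) − b(l)(d(l) + mu)⁻¹ c(l)` is positive real and Cayley inner on
the right bi-half-plane, and in particular `l ↦ g(l, r)` is positive real for
every constant `r > 0`. -/
theorem darlington_stmt11 (a b c d : ℂ → ℂ)
    (hra : IsRationalFn a) (hrb : IsRationalFn b)
    (hrc : IsRationalFn c) (hrd : IsRationalFn d)
    (hpos : ∀ l : ℂ, 0 < l.re →
        (((2 : ℂ)⁻¹ : ℂ) • (!![a l, b l; c l, d l] +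
          (!![a l, b l; c l, d l])ᴴ)).PosSemidef)
    (hinner : ∀ t : ℝ,
        !![a ((t : ℂ) * Complex.I), b ((t : ℂ) * Complex.I);
           c ((t : ℂ) * Complex.I), d ((t : ℂ) * Complex.I)] +
        (!![a ((t : ℂ) * Complex.I), b ((t : ℂ) * Complex.I);
            c ((t : ℂ) * Complex.I), d ((t : ℂ) * Complex.I)])ᴴ = 0) :
    -- g is positive real on the right bi-half-plane
    ((∀ l mu : ℂ, 0 < l.re → 0 < mu.re → d l + mu ≠ 0 →
        0 ≤ (a l - b l * (d l + mu)⁻¹ * c l).re) ∧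
    -- g is Cayley inner: Re g = 0 at purely imaginary points where defined
     (∀ s t : ℝ, d ((s : ℂ) * Complex.I) + (t : ℂ) * Complex.I ≠ 0 →
        (a ((s : ℂ) * Complex.I) -
          b ((s : ℂ) * Complex.I) *
            (d ((s : ℂ) * Complex.I) + (t : ℂ) * Complex.I)⁻¹ *
              c ((s : ℂ) * Complex.I)).re = 0) ∧
    -- in particular, l ↦ g(l, r) is positive real for each r > 0
     (∀ r : ℝ, 0 < r → ∀ l : ℂ, 0 < l.re → d l + (r : ℂ) ≠ 0 →
        0 ≤ (a l - b l * (d l + (r : ℂ))⁻¹ * c l).re)) := by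
  have main : ∀ l mu : ℂ, 0 < l.re → 0 ≤ mu.re → d l + mu ≠ 0 →
      0 ≤ (a l - b l * (d l + mu)⁻¹ * c l).re := by
    intro l mu hl hmu h
    rw [schur_id _ _ _ _ _ h]
    have h1 := quad_nonneg (a l) (b l) (c l) (d l) (-(d l + mu)⁻¹ * c l) (hpos l hl)
    have h2 : 0 ≤ mu.re * Complex.normSq (-(d l + mu)⁻¹ * c l) :=
      mul_nonneg hmu (Complex.normSq_nonneg _)
    linarith
  refine ⟨fun l mu hl hmu h => main l mu hl hmu.le h, fun s t h => ?_, fun r hr l hl h => ?_⟩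
  · rw [schur_id _ _ _ _ _ h]
    have h1 := quad_zero _ _ _ _ (-(d ((s:ℂ)*Complex.I) + (t:ℂ)*Complex.I)⁻¹ *
      c ((s:ℂ)*Complex.I)) (hinner s)
    simp only [h1, Complex.mul_re, Complex.ofReal_re, Complex.I_re, Complex.ofReal_im,
      Complex.I_im] at *
    ring
  · exact main l (r:ℂ) hl (by simp [hr.le]) h
end
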